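/- arXiv:1001.2607 — 5 statements merged into one kernel-verified Lean document; each statement's English description precedes it below -/
import Mathlib

section
/- Suppose y is holomorphic near a point x₀ ∈ ℂ and satisfies y(x)⁵ + a·y(x) + x = 0 for all x near x₀, where a ∈ ℂ and 256 a⁵ + 3125 x₀⁴ ≠ 0. Then (256 a⁵ + 3125 x⁴) y⁗(x) + 31250 x³ y'''(x) + 73125 x² y''(x) + 31875 x y'(x) − 1155 y(x) = 0 holds in a neighborhood of x₀. -/
open Filter

private lemma alg_identity5 (Y A X : ℂ) (hD : 5*Y^4 + A ≠ 0) (h0 : Y^5 + A*Y + X = 0) :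
    (256*A^5 + 3125*X^4) * ((-120*A^2*Y + 10800*A*Y^5 - 63000*Y^9)/(5*Y^4+A)^7)
      + 31250*X^3 * ((60*A*Y^2 - 900*Y^6)/(5*Y^4+A)^5)
      + 73125*X^2 * (-20*Y^3/(5*Y^4+A)^3)
      + 31875*X * (-(5*Y^4+A)⁻¹) - 1155*Y = 0 := by
  have hu : (5*Y^4 + A) * (5*Y^4 + A)⁻¹ = 1 := mul_inv_cancel₀ hD
  set u := (5*Y^4 + A)⁻¹ with hudef
  rw [div_eq_mul_inv, div_eq_mul_inv, div_eq_mul_inv, ← inv_pow, ← inv_pow, ← inv_pow, ← hudef]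
  linear_combination (-31250*X^3*(60*A*Y^2 - 900*Y^6)*u^5*((u*(5*Y^4 + A))^0 + (u*(5*Y^4 + A))^1) - 73125*X^2*(-20*Y^3)*u^3*((u*(5*Y^4 + A))^0 + (u*(5*Y^4 + A))^1 + (u*(5*Y^4 + A))^2 + (u*(5*Y^4 + A))^3) + 31875*X*u*((u*(5*Y^4 + A))^0 + (u*(5*Y^4 + A))^1 + (u*(5*Y^4 + A))^2 + (u*(5*Y^4 + A))^3 + (u*(5*Y^4 + A))^4 + (u*(5*Y^4 + A))^5) + 1155*Y*((u*(5*Y^4 + A))^0 + (u*(5*Y^4 + A))^1 + (u*(5*Y^4 + A))^2 + (u*(5*Y^4 + A))^3 + (u*(5*Y^4 + A))^4 + (u*(5*Y^4 + A))^5 + (u*(5*Y^4 + A))^6)) * hu + (u^7*((-31875)*A^6 + (-375000)*Y*A^2*X^3 + (2250000)*Y^2*A^3*X^2 + (-3712500)*Y^3*A^4*X + (2756250)*Y^4*A^5 + (33750000)*Y^5*A*X^3 + (-42750000)*Y^6*A^2*X^2 + (11250000)*Y^7*A^3*X + (-19490625)*Y^8*A^4 + (-196875000)*Y^9*X^3 +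 (-71250000)*Y^10*A*X^2 + (-105375000)*Y^11*A^2*X + (14437500)*Y^12*A^3 + (-506250000)*Y^14*X^2 + (-153750000)*Y^15*A*X + (-39703125)*Y^16*A^2 + (-407812500)*Y^19*X + (-36093750)*Y^20*A + (-90234375)*Y^24)) * h0

theorem stmt5 (a x₀ : ℂ) (hx₀ : 256 * a ^ 5 + 3125 * x₀ ^ 4 ≠ 0)
    (y : ℂ → ℂ) (hy : AnalyticAt ℂ y x₀)
    (halg : ∀ᶠ x in nhds x₀, (y x) ^ 5 + a * y x + x = 0) :
    ∀ᶠ x in nhds x₀,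
      (256 * a ^ 5 + 3125 * x ^ 4) * iteratedDeriv 4 y x
        + 31250 * x ^ 3 * iteratedDeriv 3 y x
        + 73125 * x ^ 2 * iteratedDeriv 2 y x
        + 31875 * x * deriv y x - 1155 * y x = 0 := by
  have h0 : (y x₀) ^ 5 + a * y x₀ + x₀ = 0 := halg.self_of_nhds
  have hD0 : 5 * (y x₀) ^ 4 + a ≠ 0 := by
    intro h
    apply hx₀
    linear_combination (3125*x₀^3 - 3125*(y x₀)*a*x₀^2 + 3125*(y x₀)^2*a^2*x₀
        - 3125*(y x₀)^3*a^3 - 3125*(y x₀)^5*x₀^2 + 6250*(y x₀)^6*a*x₀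
        - 9375*(y x₀)^7*a^2 + 3125*(y x₀)^10*x₀ - 9375*(y x₀)^11*a
        - 3125*(y x₀)^15) * h0
      + (256*a^4 + 1845*(y x₀)^4*a^3 + 3275*(y x₀)^8*a^2 + 2375*(y x₀)^12*a
        + 625*(y x₀)^16) * h
  have hcont : ContinuousAt (fun x => 5 * (y x) ^ 4 + a) x₀ :=
    (continuousAt_const.mul (hy.continuousAt.pow 4)).add continuousAt_const
  have hDne : ∀ᶠ x in nhds x₀, 5 * (y x) ^ 4 + a ≠ 0 := hcont.eventually_ne hD0
  have H : ∀ᶠ x in nhds x₀, AnalyticAt ℂ y x ∧ (5 * (y x) ^ 4 + a ≠ 0)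
      ∧ ((y x) ^ 5 + a * y x + x = 0) :=
    hy.eventually_analyticAt.and (hDne.and halg)
  -- first derivative
  have key1 : ∀ᶠ x in nhds x₀, HasDerivAt y (-(5 * (y x) ^ 4 + a)⁻¹) x := by
    filter_upwards [H.eventually_nhds] with x hx
    have hxa : AnalyticAt ℂ y x := hx.self_of_nhds.1
    have hxD : 5 * (y x) ^ 4 + a ≠ 0 := hx.self_of_nhds.2.1
    have hrel : (fun z => (y z) ^ 5 + a * y z + z) =ᶠ[nhds x] (fun _ => (0 : ℂ)) :=
      hx.mono fun z h => h.2.2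
    have hdy : HasDerivAt y (deriv y x) x := hxa.differentiableAt.hasDerivAt
    have hf : HasDerivAt (fun z => (y z) ^ 5 + a * y z + z)
        (5 * (y x) ^ 4 * deriv y x + a * deriv y x + 1) x := by
      have := ((hdy.pow 5).add (hdy.const_mul a)).add (hasDerivAt_id x)
      exact this.congr_deriv (by push_cast; ring)
    have hzero : deriv (fun z => (y z) ^ 5 + a * y z + z) x = 0 := by
      rw [hrel.deriv_eq]; simp
    have hval : 5 * (y x) ^ 4 * deriv y x + a * deriv y x + 1 = 0 := by
      rw [← hf.deriv, hzero]
    have hd : deriv y x = -(5 * (y x) ^ 4 + a)⁻¹ := by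
      field_simp
      linear_combination hval
    rw [← hd]; exact hdy
  -- second derivative
  have key2 : ∀ᶠ x in nhds x₀, HasDerivAt (deriv y)
      (-20 * (y x) ^ 3 / (5 * (y x) ^ 4 + a) ^ 3) x := by
    filter_upwards [key1.eventually_nhds, H] with x hx1 hx
    have hxD : 5 * (y x) ^ 4 + a ≠ 0 := hx.2.1
    have hdy : HasDerivAt y (-(5 * (y x) ^ 4 + a)⁻¹) x := hx1.self_of_nhds
    have heq : deriv y =ᶠ[nhds x] (fun z => -(5 * (y z) ^ 4 + a)⁻¹) :=
      hx1.mono fun z h => h.deriv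
    have hin : HasDerivAt (fun z => 5 * (y z) ^ 4 + a)
        (5 * (4 * (y x) ^ 3 * (-(5 * (y x) ^ 4 + a)⁻¹))) x := by
      have := ((hdy.pow 4).const_mul 5).add_const a
      exact this.congr_deriv (by push_cast; ring)
    have hg : HasDerivAt (fun z => -(5 * (y z) ^ 4 + a)⁻¹)
        (-20 * (y x) ^ 3 / (5 * (y x) ^ 4 + a) ^ 3) x := by
      have h' := (hin.inv hxD).neg
      refine h'.congr_deriv ?_
      field_simp
      ring
    exact hg.congr_of_eventuallyEq heq
  -- third derivative
  have key3 : ∀ᶠ x in nhds x₀, HasDerivAt (deriv (deriv y))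
      ((60 * a * (y x) ^ 2 - 900 * (y x) ^ 6) / (5 * (y x) ^ 4 + a) ^ 5) x := by
    filter_upwards [key1, key2.eventually_nhds, H] with x hx1 hx2 hx
    have hxD : 5 * (y x) ^ 4 + a ≠ 0 := hx.2.1
    have hxD3 : (5 * (y x) ^ 4 + a) ^ 3 ≠ 0 := pow_ne_zero _ hxD
    have heq : deriv (deriv y) =ᶠ[nhds x]
        (fun z => -20 * (y z) ^ 3 / (5 * (y z) ^ 4 + a) ^ 3) :=
      hx2.mono fun z h => h.deriv
    have hnum : HasDerivAt (fun z => -20 * (y z) ^ 3)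
        (-20 * (3 * (y x) ^ 2 * (-(5 * (y x) ^ 4 + a)⁻¹))) x := by
      have := (hx1.pow 3).const_mul (-20 : ℂ)
      exact this.congr_deriv (by push_cast; ring)
    have hden : HasDerivAt (fun z => (5 * (y z) ^ 4 + a) ^ 3)
        (3 * (5 * (y x) ^ 4 + a) ^ 2 * (5 * (4 * (y x) ^ 3 * (-(5 * (y x) ^ 4 + a)⁻¹)))) x := by
      have hin : HasDerivAt (fun z => 5 * (y z) ^ 4 + a)
          (5 * (4 * (y x) ^ 3 * (-(5 * (y x) ^ 4 + a)⁻¹))) x := by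
        have := ((hx1.pow 4).const_mul 5).add_const a
        exact this.congr_deriv (by push_cast; ring)
      have := hin.pow 3
      exact this.congr_deriv (by push_cast; ring)
    have hg := hnum.div hden hxD3
    have hg' : HasDerivAt (fun z => -20 * (y z) ^ 3 / (5 * (y z) ^ 4 + a) ^ 3)
        ((60 * a * (y x) ^ 2 - 900 * (y x) ^ 6) / (5 * (y x) ^ 4 + a) ^ 5) x := by
      refine hg.congr_deriv ?_
      field_simp
      ring
    exact hg'.congr_of_eventuallyEq heq
  -- fourth derivative
  have key4 : ∀ᶠ x in nhds x₀, HasDerivAt (deriv (deriv (deriv y)))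
      ((-120 * a ^ 2 * (y x) + 10800 * a * (y x) ^ 5 - 63000 * (y x) ^ 9)
        / (5 * (y x) ^ 4 + a) ^ 7) x := by
    filter_upwards [key1, key3.eventually_nhds, H] with x hx1 hx3 hx
    have hxD : 5 * (y x) ^ 4 + a ≠ 0 := hx.2.1
    have hxD5 : (5 * (y x) ^ 4 + a) ^ 5 ≠ 0 := pow_ne_zero _ hxD
    have heq : deriv (deriv (deriv y)) =ᶠ[nhds x]
        (fun z => (60 * a * (y z) ^ 2 - 900 * (y z) ^ 6) / (5 * (y z) ^ 4 + a) ^ 5) :=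
      hx3.mono fun z h => h.deriv
    have hnum : HasDerivAt (fun z => 60 * a * (y z) ^ 2 - 900 * (y z) ^ 6)
        (60 * a * (2 * (y x) * (-(5 * (y x) ^ 4 + a)⁻¹))
          - 900 * (6 * (y x) ^ 5 * (-(5 * (y x) ^ 4 + a)⁻¹))) x := by
      have := ((hx1.pow 2).const_mul (60 * a)).sub ((hx1.pow 6).const_mul (900 : ℂ))
      exact this.congr_deriv (by push_cast; ring)
    have hden : HasDerivAt (fun z => (5 * (y z) ^ 4 + a) ^ 5)
        (5 * (5 * (y x) ^ 4 + a) ^ 4 * (5 * (4 * (y x) ^ 3 * (-(5 * (y x) ^ 4 + a)⁻¹)))) x := by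
      have hin : HasDerivAt (fun z => 5 * (y z) ^ 4 + a)
          (5 * (4 * (y x) ^ 3 * (-(5 * (y x) ^ 4 + a)⁻¹))) x := by
        have := ((hx1.pow 4).const_mul 5).add_const a
        exact this.congr_deriv (by push_cast; ring)
      have := hin.pow 5
      exact this.congr_deriv (by push_cast; ring)
    have hg := hnum.div hden hxD5
    have hg' : HasDerivAt
        (fun z => (60 * a * (y z) ^ 2 - 900 * (y z) ^ 6) / (5 * (y z) ^ 4 + a) ^ 5)
        ((-120 * a ^ 2 * (y x) + 10800 * a * (y x) ^ 5 - 63000 * (y x) ^ 9)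
          / (5 * (y x) ^ 4 + a) ^ 7) x := by
      refine hg.congr_deriv ?_
      field_simp
      ring
    exact hg'.congr_of_eventuallyEq heq
  -- conclusion
  filter_upwards [key1, key2, key3, key4, H] with x h1 h2 h3 h4 hx
  have hxD : 5 * (y x) ^ 4 + a ≠ 0 := hx.2.1
  have hd1 : deriv y x = -(5 * (y x) ^ 4 + a)⁻¹ := h1.deriv
  have hd2 : iteratedDeriv 2 y x = -20 * (y x) ^ 3 / (5 * (y x) ^ 4 + a) ^ 3 := by
    rw [show iteratedDeriv 2 y = deriv (deriv y) from by
      rw [iteratedDeriv_succ, iteratedDeriv_one]]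
    exact h2.deriv
  have hd3 : iteratedDeriv 3 y x
      = (60 * a * (y x) ^ 2 - 900 * (y x) ^ 6) / (5 * (y x) ^ 4 + a) ^ 5 := by
    rw [show iteratedDeriv 3 y = deriv (deriv (deriv y)) from by
      rw [show iteratedDeriv 3 y = deriv (iteratedDeriv 2 y) from iteratedDeriv_succ,
        iteratedDeriv_succ, iteratedDeriv_one]]
    exact h3.deriv
  have hd4 : iteratedDeriv 4 y x
      = (-120 * a ^ 2 * (y x) + 10800 * a * (y x) ^ 5 - 63000 * (y x) ^ 9)
        / (5 * (y x) ^ 4 + a) ^ 7 := by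
    rw [show iteratedDeriv 4 y = deriv (deriv (deriv (deriv y))) from by
      rw [show iteratedDeriv 4 y = deriv (iteratedDeriv 3 y) from iteratedDeriv_succ,
        show iteratedDeriv 3 y = deriv (iteratedDeriv 2 y) from iteratedDeriv_succ,
        iteratedDeriv_succ, iteratedDeriv_one]]
    exact h4.deriv
  rw [hd1, hd2, hd3, hd4]
  have := alg_identity5 (y x) a x hxD hx.2.2
  linear_combination this
end

section
/- Suppose y is holomorphic near x₀ ∈ ℂ and satisfies y(x)⁵ + a·y(x)⁴ + x = 0 for all x near x₀, with a ∈ ℂ, x₀ ≠ 0, and 256 a⁵ + 3125 x₀ ≠ 0. Then ((256/5) a⁵ x³ + 625 x⁴) y⁽⁵⁾ + (384 a⁵ x² + 6875 x³) y⁽⁴⁾ + (624 a⁵ x + 19500 x²) y⁽³⁾ + (168 a⁵ + 14100 x) y⁽²⁾ + 1344 y' = 0 in a neighborhood of x₀. -/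
lemma key (a x Y Y1 Y2 Y3 Y4 Y5 : ℂ) (hq : 5*Y^4 + 4*a*Y^3 ≠ 0)
    (e0 : Y^5 + a*Y^4 + x = 0)
    (e1 : (5*Y^4+4*a*Y^3)*Y1 + 1 = 0)
    (e2 : (5*Y^4+4*a*Y^3)*Y2 + (20*Y^3+12*a*Y^2)*Y1^2 = 0)
    (e3 : (5*Y^4+4*a*Y^3)*Y3 + 3*(20*Y^3+12*a*Y^2)*Y1*Y2 + (60*Y^2+24*a*Y)*Y1^3 = 0)
    (e4 : (5*Y^4+4*a*Y^3)*Y4 + 4*(20*Y^3+12*a*Y^2)*Y1*Y3 + 3*(20*Y^3+12*a*Y^2)*Y2^2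
        + 6*(60*Y^2+24*a*Y)*Y1^2*Y2 + (120*Y+24*a)*Y1^4 = 0)
    (e5 : (5*Y^4+4*a*Y^3)*Y5 + 5*(20*Y^3+12*a*Y^2)*Y1*Y4 + 10*(20*Y^3+12*a*Y^2)*Y2*Y3
        + 10*(60*Y^2+24*a*Y)*Y1^2*Y3 + 15*(60*Y^2+24*a*Y)*Y1*Y2^2
        + 10*(120*Y+24*a)*Y1^3*Y2 + 120*Y1^5 = 0) :
    ((256/5 : ℂ) * a^5 * x^3 + 625*x^4) * Y5 + (384*a^5*x^2 + 6875*x^3) * Y4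
      + (624*a^5*x + 19500*x^2) * Y3 + (168*a^5 + 14100*x) * Y2 + 1344*Y1 = 0 := by
  have h9 : (5*Y^4 + 4*a*Y^3)^9 * (((256/5 : ℂ) * a^5 * x^3 + 625*x^4) * Y5 + (384*a^5*x^2 + 6875*x^3) * Y4
      + (624*a^5*x + 19500*x^2) * Y3 + (168*a^5 + 14100*x) * Y2 + 1344*Y1) = 0 := by
    linear_combination ((-554400000)*Y^8*a^4*x^3 + (-45416448)*Y^8*a^9*x^2 + (-3469200000)*Y^9*a^3*x^3 + (-284196864)*Y^9*a^8*x^2 + (-8284500000)*Y^10*a^2*x^3 + (-678666240)*Y^10*a^7*x^2 + (-8977500000)*Y^11*a*x^3 + (-735436800)*Y^11*a^6*x^2 + (-3740625000)*Y^12*x^3 + (-1378272000)*Y^12*a^5*x^2 + (-45416448)*Y^12*a^10*x + (-7750800000)*Y^13*a^4*x^2 + (-328040448)*Y^13*a^9*x + (-22533300000)*Y^14*a^3*x^2 + (-952221696)*Y^14*a^8*x + (-32898000000)*Y^15*a^2*x^2 + (-1387560960)*Y^15*a^7*x + (-24097500000)*Y^16*a*x^2 + (-1619923200)*Y^16*a^6*x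 + (-8257536)*Y^16*a^11 + (-7087500000)*Y^17*x^2 + (-5253648000)*Y^17*a^5*x + (-67436544)*Y^17*a^10 + (-16890300000)*Y^18*a^4*x + (-229318656)*Y^18*a^9 + (-30680700000)*Y^19*a^3*x + (-415801344)*Y^19*a^8 + (-31339500000)*Y^20*a^2*x + (-512279040)*Y^20*a^7 + (-17077500000)*Y^21*a*x + (-1023724800)*Y^21*a^6 + (-3881250000)*Y^22*x + (-3113292000)*Y^22*a^5 + (-6573000000)*Y^23*a^4 + (-8479800000)*Y^24*a^3 + (-6573000000)*Y^25*a^2 + (-2835000000)*Y^26*a + (-525000000)*Y^27) * e0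
      + ((554400000)*Y^8*a^4*x^4 + (45416448)*Y^8*a^9*x^3 + (3469200000)*Y^9*a^3*x^4 + (284196864)*Y^9*a^8*x^3 + (8284500000)*Y^10*a^2*x^4 + (678666240)*Y^10*a^7*x^3 + (8977500000)*Y^11*a*x^4 + (-2217600000)*Y^11*a^5*x^4*Y1 + (735436800)*Y^11*a^6*x^3 + (-181665792)*Y^11*a^10*x^3*Y1 + (3740625000)*Y^12*x^4 + (-16648800000)*Y^12*a^4*x^4*Y1 + (1932672000)*Y^12*a^5*x^3 + (-1363869696)*Y^12*a^9*x^3*Y1 + (90832896)*Y^12*a^10*x^2 + (-50484000000)*Y^13*a^3*x^4*Y1 + (11774400000)*Y^13*a^4*x^3 + (-4135649280)*Y^13*a^8*x^3*Y1 + (657653760)*Y^13*a^9*x^2 + (-77332500000)*Y^14*a^2*x^4*Y1 + (34287000000)*Y^14*a^3*x^3 + (8870400000)*Y^14*a^6*x^4*Y1^2 + (-6335078400)*Y^14*a^7*x^3*Y1 + (1915084800)*Y^14*a^8*x^2 + (726663168)*Y^14*a^11*x^3*Y1^2 + (-59850000000)*Y^15*a*x^4*Y1 + (50160000000)*Y^15*a^2*x^3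 + (77683200000)*Y^15*a^5*x^4*Y1^2 + (-11407872000)*Y^15*a^6*x^3*Y1 + (2801664000)*Y^15*a^7*x^2 + (6363807744)*Y^15*a^10*x^3*Y1^2 + (-363331584)*Y^15*a^11*x^2*Y1 + (-18703125000)*Y^16*x^4*Y1 + (36815625000)*Y^16*a*x^3 + (285180000000)*Y^16*a^4*x^4*Y1^2 + (-56760960000)*Y^16*a^5*x^3*Y1 + (3733632000)*Y^16*a^6*x^2 + (23361945600)*Y^16*a^9*x^3*Y1^2 + (-3084779520)*Y^16*a^10*x^2*Y1 + (53673984)*Y^16*a^11*x + (10828125000)*Y^17*x^3 + (561750000000)*Y^17*a^3*x^4*Y1^2 + (-196020000000)*Y^17*a^4*x^3*Y1 + (14382720000)*Y^17*a^5*x^2 + (-35481600000)*Y^17*a^7*x^4*Y1^3 + (46018560000)*Y^17*a^8*x^3*Y1^2 + (-10948608000)*Y^17*a^9*x^2*Y1 + (440893440)*Y^17*a^10*x + (-2906652672)*Y^17*a^12*x^3*Y1^3 + (626062500000)*Y^18*a^2*x^4*Y1^2 + (-372075000000)*Y^18*a^3*x^3*Y1 + (47174400000)*Y^18*a^4*x^2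 + (-355084800000)*Y^18*a^6*x^4*Y1^3 + (77306880000)*Y^18*a^7*x^3*Y1^2 + (-20782080000)*Y^18*a^8*x^2*Y1 + (1509580800)*Y^18*a^9*x + (-29088546816)*Y^18*a^11*x^3*Y1^3 + (1453326336)*Y^18*a^12*x^2*Y1^2 + (374062500000)*Y^19*a*x^4*Y1^2 + (-398062500000)*Y^19*a^2*x^3*Y1 + (86112000000)*Y^19*a^3*x^2 + (-1529136000000)*Y^19*a^5*x^4*Y1^3 + (284083200000)*Y^19*a^6*x^3*Y1^2 + (-28942848000)*Y^19*a^7*x^2*Y1 + (2755584000)*Y^19*a^8*x + (-125266821120)*Y^19*a^10*x^3*Y1^3 + (14155776000)*Y^19*a^11*x^2*Y1^2 + (-214695936)*Y^19*a^12*x*Y1 + (93515625000)*Y^20*x^4*Y1^2 + (-227390625000)*Y^20*a*x^3*Y1 + (88335000000)*Y^20*a^2*x^2 + (-3672900000000)*Y^20*a^4*x^4*Y1^3 + (1067884800000)*Y^20*a^5*x^3*Y1^2 + (-76199040000)*Y^20*a^6*x^2*Y1 + (3519763200)*Y^20*a^7*x + (141926400000)*Y^20*a^8*x^4*Y1^4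 + (-300883968000)*Y^20*a^9*x^3*Y1^3 + (59218329600)*Y^20*a^10*x^2*Y1^2 + (-2031943680)*Y^20*a^11*x*Y1 + (8257536)*Y^20*a^12 + (11626610688)*Y^20*a^13*x^3*Y1^4 + (-54140625000)*Y^21*x^3*Y1 + (48262500000)*Y^21*a*x^2 + (-5313000000000)*Y^21*a^3*x^4*Y1^3 + (2468400000000)*Y^21*a^4*x^3*Y1^2 + (-260611200000)*Y^21*a^5*x^2*Y1 + (7897296000)*Y^21*a^6*x + (1597747200000)*Y^21*a^7*x^4*Y1^4 + (-539320320000)*Y^21*a^8*x^3*Y1^3 + (137871360000)*Y^21*a^9*x^2*Y1^2 + (-8242790400)*Y^21*a^10*x*Y1 + (75694080)*Y^21*a^11 + (130887450624)*Y^21*a^12*x^3*Y1^4 + (-5813305344)*Y^21*a^13*x^2*Y1^3 + (10968750000)*Y^22*x^2 + (-4626562500000)*Y^22*a^2*x^4*Y1^3 + (3452625000000)*Y^22*a^3*x^3*Y1^2 + (-580320000000)*Y^22*a^4*x^2*Y1 + (25257240000)*Y^22*a^5*x + (7891968000000)*Y^22*a^6*x^4*Y1^4 + (-1522867200000)*Y^22*a^7*x^3*Y1^3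 + (219681792000)*Y^22*a^8*x^2*Y1^2 + (-18570240000)*Y^22*a^9*x*Y1 + (296755200)*Y^22*a^10 + (646510018560)*Y^22*a^11*x^3*Y1^4 + (-63889735680)*Y^22*a^12*x^2*Y1^3 + (858783744)*Y^22*a^13*x*Y1^2 + (-2244375000000)*Y^23*a*x^4*Y1^3 + (2899875000000)*Y^23*a^2*x^3*Y1^2 + (-783900000000)*Y^23*a^3*x^2*Y1 + (54144000000)*Y^23*a^4*x + (22337280000000)*Y^23*a^5*x^4*Y1^4 + (-5691955200000)*Y^23*a^6*x^3*Y1^3 + (449510400000)*Y^23*a^7*x^2*Y1^2 + (-27856972800)*Y^23*a^8*x*Y1 + (645120000)*Y^23*a^9 + (1829869977600)*Y^23*a^10*x^3*Y1^4 + (-307652198400)*Y^23*a^11*x^2*Y1^3 + (9201254400)*Y^23*a^12*x*Y1^2 + (-33030144)*Y^23*a^13*Y1 + (-467578125000)*Y^24*x^4*Y1^3 + (1353515625000)*Y^24*a*x^3*Y1^2 + (-634725000000)*Y^24*a^2*x^2*Y1 + (70500000000)*Y^24*a^3*x + (39616500000000)*Y^24*a^4*x^4*Y1^4 + (-15213024000000)*Y^24*a^5*x^3*Y1^3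 + (1423440000000)*Y^24*a^6*x^2*Y1^2 + (-49188000000)*Y^24*a^7*x*Y1 + (928080384)*Y^24*a^8 + (3245383680000)*Y^24*a^9*x^3*Y1^4 + (-847577088000)*Y^24*a^10*x^2*Y1^3 + (43130880000)*Y^24*a^11*x*Y1^2 + (-344064000)*Y^24*a^12*Y1 + (270703125000)*Y^25*x^3*Y1^2 + (-285187500000)*Y^25*a*x^2*Y1 + (54990000000)*Y^25*a^2*x + (45071250000000)*Y^25*a^3*x^4*Y1^4 + (-26152500000000)*Y^25*a^4*x^3*Y1^3 + (3624336000000)*Y^25*a^5*x^2*Y1^2 + (-140515440000)*Y^25*a^6*x*Y1 + (1536003840)*Y^25*a^7 + (3692236800000)*Y^25*a^8*x^3*Y1^4 + (-1460736000000)*Y^25*a^9*x^2*Y1^3 + (115494912000)*Y^25*a^10*x*Y1^2 + (-1565491200)*Y^25*a^11*Y1 + (-54843750000)*Y^26*x^2*Y1 + (23793750000)*Y^26*a*x + (32110312500000)*Y^26*a^2*x^4*Y1^4 + (-28862625000000)*Y^26*a^3*x^3*Y1^3 + (6037200000000)*Y^26*a^4*x^2*Y1^2 + (-342862200000)*Y^26*a^5*x*Y1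 + (4137016800)*Y^26*a^6 + (2630476800000)*Y^26*a^7*x^3*Y1^4 + (-1612108800000)*Y^26*a^8*x^2*Y1^3 + (193190400000)*Y^26*a^9*x*Y1^2 + (-4064256000)*Y^26*a^10*Y1 + (4406250000)*Y^27*x + (13092187500000)*Y^27*a*x^4*Y1^4 + (-19913437500000)*Y^27*a^2*x^3*Y1^3 + (6458400000000)*Y^27*a^3*x^2*Y1^2 + (-552720000000)*Y^27*a^4*x*Y1 + (9686292000)*Y^27*a^5 + (1072512000000)*Y^27*a^6*x^3*Y1^4 + (-1112256000000)*Y^27*a^7*x^2*Y1^3 + (206668800000)*Y^27*a^8*x*Y1^2 + (-6585600000)*Y^27*a^9*Y1 + (2337890625000)*Y^28*x^4*Y1^4 + (-7850390625000)*Y^28*a*x^3*Y1^3 + (4314375000000)*Y^28*a^2*x^2*Y1^2 + (-572460000000)*Y^28*a^3*x*Y1 + (15052800000)*Y^28*a^4 + (191520000000)*Y^28*a^5*x^3*Y1^4 + (-438480000000)*Y^28*a^6*x^2*Y1^3 + (138060000000)*Y^28*a^7*x*Y1^2 + (-6820800000)*Y^28*a^8*Y1 + (-1353515625000)*Y^29*x^3*Y1^3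 + (1645312500000)*Y^29*a*x^2*Y1^2 + (-370125000000)*Y^29*a^2*x*Y1 + (15052800000)*Y^29*a^3 + (-75600000000)*Y^29*a^5*x^2*Y1^3 + (52650000000)*Y^29*a^6*x*Y1^2 + (-4410000000)*Y^29*a^7*Y1 + (274218750000)*Y^30*x^2*Y1^2 + (-136593750000)*Y^30*a*x*Y1 + (9408000000)*Y^30*a^2 + (8775000000)*Y^30*a^5*x*Y1^2 + (-1627500000)*Y^30*a^6*Y1 + (-22031250000)*Y^31*x*Y1 + (3360000000)*Y^31*a + (-262500000)*Y^31*a^5*Y1 + (525000000)*Y^32) * e1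
      + ((-55910400000)*Y^21*a^8*x^4*Y1^3 + (-4580179968)*Y^21*a^13*x^3*Y1^3 + (-609024000000)*Y^22*a^7*x^4*Y1^3 + (44605440000)*Y^22*a^8*x^3*Y1^2 + (12902400000)*Y^22*a^8*x^4*Y1*Y2 + (-49891246080)*Y^22*a^12*x^3*Y1^3 + (2491416576)*Y^22*a^13*x^2*Y1^2 + (1056964608)*Y^22*a^13*x^3*Y1*Y2 + (-2910720000000)*Y^23*a^6*x^4*Y1^3 + (476467200000)*Y^23*a^7*x^3*Y1^2 + (138240000000)*Y^23*a^7*x^4*Y1*Y2 + (-11501568000)*Y^23*a^8*x^2*Y1 + (-4055040000)*Y^23*a^8*x^3*Y2 + (-238446182400)*Y^23*a^11*x^3*Y1^3 + (26612858880)*Y^23*a^12*x^2*Y1^2 + (11324620800)*Y^23*a^12*x^3*Y1*Y2 + (-368050176)*Y^23*a^13*x*Y1 + (-226492416)*Y^23*a^13*x^2*Y2 + (-7970400000000)*Y^24*a^5*x^4*Y1^3 + (2228160000000)*Y^24*a^6*x^3*Y1^2 + (648000000000)*Y^24*a^6*x^4*Y1*Y2 + (-119808000000)*Y^24*a^7*x^2*Y1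 + (-42240000000)*Y^24*a^7*x^3*Y2 + (924057600)*Y^24*a^8*x + (-652935168000)*Y^24*a^10*x^3*Y1^3 + (124452864000)*Y^24*a^11*x^2*Y1^2 + (53084160000)*Y^24*a^11*x^3*Y1*Y2 + (-3833856000)*Y^24*a^12*x*Y1 + (-2359296000)*Y^24*a^12*x^2*Y2 + (11010048)*Y^24*a^13 + (-13672500000000)*Y^25*a^4*x^4*Y1^3 + (5955840000000)*Y^25*a^5*x^3*Y1^2 + (1735200000000)*Y^25*a^5*x^4*Y1*Y2 + (-545126400000)*Y^25*a^6*x^2*Y1 + (-192192000000)*Y^25*a^6*x^3*Y2 + (9240576000)*Y^25*a^7*x + (-1120051200000)*Y^25*a^9*x^3*Y1^3 + (332660736000)*Y^25*a^10*x^2*Y1^2 + (142147584000)*Y^25*a^10*x^3*Y1*Y2 + (-17444044800)*Y^25*a^11*x*Y1 + (-10734796800)*Y^25*a^11*x^2*Y2 + (110100480)*Y^25*a^12 + (-15039375000000)*Y^26*a^3*x^4*Y1^3 + (9949500000000)*Y^26*a^4*x^3*Y1^2 + (2902500000000)*Y^26*a^4*x^4*Y1*Y2 + (-1415232000000)*Y^26*a^5*x^2*Y1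 + (-498960000000)*Y^26*a^5*x^3*Y2 + (40427520000)*Y^26*a^6*x + (-1232025600000)*Y^26*a^8*x^3*Y1^3 + (555724800000)*Y^26*a^9*x^2*Y1^2 + (237772800000)*Y^26*a^9*x^3*Y1*Y2 + (-45287424000)*Y^26*a^10*x*Y1 + (-27869184000)*Y^26*a^10*x^2*Y2 + (481689600)*Y^26*a^11 + (-10354687500000)*Y^27*a^2*x^4*Y1^3 + (10634250000000)*Y^27*a^3*x^3*Y1^2 + (3105000000000)*Y^27*a^3*x^4*Y1*Y2 + (-2293200000000)*Y^27*a^4*x^2*Y1 + (-808500000000)*Y^27*a^4*x^3*Y2 + (101068800000)*Y^27*a^5*x + (-848256000000)*Y^27*a^7*x^3*Y1^3 + (593971200000)*Y^27*a^8*x^2*Y1^2 + (254361600000)*Y^27*a^8*x^3*Y1*Y2 + (-73382400000)*Y^27*a^9*x*Y1 + (-45158400000)*Y^27*a^9*x^2*Y2 + (1204224000)*Y^27*a^10 + (-4078125000000)*Y^28*a*x^4*Y1^3 + (7100156250000)*Y^28*a^2*x^3*Y1^2 + (2074218750000)*Y^28*a^2*x^4*Y1*Y2 + (-2375100000000)*Y^28*a^3*x^2*Y1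 + (-837375000000)*Y^28*a^3*x^3*Y2 + (157920000000)*Y^28*a^4*x + (-334080000000)*Y^28*a^6*x^3*Y1^3 + (396576000000)*Y^28*a^7*x^2*Y1^2 + (169920000000)*Y^28*a^7*x^3*Y1*Y2 + (-76003200000)*Y^28*a^8*x*Y1 + (-46771200000)*Y^28*a^8*x^2*Y2 + (1881600000)*Y^28*a^9 + (-703125000000)*Y^29*x^4*Y1^3 + (2707031250000)*Y^29*a*x^3*Y1^2 + (791015625000)*Y^29*a*x^4*Y1*Y2 + (-1535625000000)*Y^29*a^2*x^2*Y1 + (-541406250000)*Y^29*a^2*x^3*Y2 + (157920000000)*Y^29*a^3*x + (-57600000000)*Y^29*a^5*x^3*Y1^3 + (151200000000)*Y^29*a^6*x^2*Y1^2 + (64800000000)*Y^29*a^6*x^3*Y1*Y2 + (-49140000000)*Y^29*a^7*x*Y1 + (-30240000000)*Y^29*a^7*x^2*Y2 + (1881600000)*Y^29*a^8 + (451171875000)*Y^30*x^3*Y1^2 + (131835937500)*Y^30*x^4*Y1*Y2 + (-566718750000)*Y^30*a*x^2*Y1 + (-199804687500)*Y^30*a*x^3*Y2 + (98700000000)*Y^30*a^2*x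 + (25200000000)*Y^30*a^5*x^2*Y1^2 + (10800000000)*Y^30*a^5*x^3*Y1*Y2 + (-18135000000)*Y^30*a^6*x*Y1 + (-11160000000)*Y^30*a^6*x^2*Y2 + (1176000000)*Y^30*a^7 + (-91406250000)*Y^31*x^2*Y1 + (-32226562500)*Y^31*x^3*Y2 + (35250000000)*Y^31*a*x + (-2925000000)*Y^31*a^5*x*Y1 + (-1800000000)*Y^31*a^5*x^2*Y2 + (420000000)*Y^31*a^6 + (5507812500)*Y^32*x + (65625000)*Y^32*a^5) * e2
      + ((4915200000)*Y^22*a^8*x^4*Y1^2 + (402653184)*Y^22*a^13*x^3*Y1^2 + (52224000000)*Y^23*a^7*x^4*Y1^2 + (-5406720000)*Y^23*a^8*x^3*Y1 + (-1228800000)*Y^23*a^8*x^4*Y2 + (4278190080)*Y^23*a^12*x^3*Y1^2 + (-301989888)*Y^23*a^13*x^2*Y1 + (-100663296)*Y^23*a^13*x^3*Y2 + (243200000000)*Y^24*a^6*x^4*Y1^2 + (-56320000000)*Y^24*a^7*x^3*Y1 + (-12800000000)*Y^24*a^7*x^4*Y2 + (1277952000)*Y^24*a^8*x^2 + (19922944000)*Y^24*a^11*x^3*Y1^2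 + (-3145728000)*Y^24*a^12*x^2*Y1 + (-1048576000)*Y^24*a^12*x^3*Y2 + (40894464)*Y^24*a^13*x + (648000000000)*Y^25*a^5*x^4*Y1^2 + (-256256000000)*Y^25*a^6*x^3*Y1 + (-58240000000)*Y^25*a^6*x^4*Y2 + (12779520000)*Y^25*a^7*x^2 + (53084160000)*Y^25*a^10*x^3*Y1^2 + (-14313062400)*Y^25*a^11*x^2*Y1 + (-4771020800)*Y^25*a^11*x^3*Y2 + (408944640)*Y^25*a^12*x + (1080000000000)*Y^26*a^4*x^4*Y1^2 + (-665280000000)*Y^26*a^5*x^3*Y1 + (-151200000000)*Y^26*a^5*x^4*Y2 + (55910400000)*Y^26*a^6*x^2 + (88473600000)*Y^26*a^9*x^3*Y1^2 + (-37158912000)*Y^26*a^10*x^2*Y1 + (-12386304000)*Y^26*a^10*x^3*Y2 + (1789132800)*Y^26*a^11*x + (1152500000000)*Y^27*a^3*x^4*Y1^2 + (-1078000000000)*Y^27*a^4*x^3*Y1 + (-245000000000)*Y^27*a^4*x^4*Y2 + (139776000000)*Y^27*a^5*x^2 + (94412800000)*Y^27*a^8*x^3*Y1^2 + (-60211200000)*Y^27*a^9*x^2*Y1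 + (-20070400000)*Y^27*a^9*x^3*Y2 + (4472832000)*Y^27*a^10*x + (768750000000)*Y^28*a^2*x^4*Y1^2 + (-1116500000000)*Y^28*a^3*x^3*Y1 + (-253750000000)*Y^28*a^3*x^4*Y2 + (218400000000)*Y^28*a^4*x^2 + (62976000000)*Y^28*a^7*x^3*Y1^2 + (-62361600000)*Y^28*a^8*x^2*Y1 + (-20787200000)*Y^28*a^8*x^3*Y2 + (6988800000)*Y^28*a^9*x + (292968750000)*Y^29*a*x^4*Y1^2 + (-721875000000)*Y^29*a^2*x^3*Y1 + (-164062500000)*Y^29*a^2*x^4*Y2 + (218400000000)*Y^29*a^3*x^2 + (24000000000)*Y^29*a^6*x^3*Y1^2 + (-40320000000)*Y^29*a^7*x^2*Y1 + (-13440000000)*Y^29*a^7*x^3*Y2 + (6988800000)*Y^29*a^8*x + (48828125000)*Y^30*x^4*Y1^2 + (-266406250000)*Y^30*a*x^3*Y1 + (-60546875000)*Y^30*a*x^4*Y2 + (136500000000)*Y^30*a^2*x^2 + (4000000000)*Y^30*a^5*x^3*Y1^2 + (-14880000000)*Y^30*a^6*x^2*Y1 + (-4960000000)*Y^30*a^6*x^3*Y2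 + (4368000000)*Y^30*a^7*x + (-42968750000)*Y^31*x^3*Y1 + (-9765625000)*Y^31*x^4*Y2 + (48750000000)*Y^31*a*x^2 + (-2400000000)*Y^31*a^5*x^2*Y1 + (-800000000)*Y^31*a^5*x^3*Y2 + (1560000000)*Y^31*a^6*x + (7617187500)*Y^32*x^2 + (243750000)*Y^32*a^5*x) * e3
      + ((-614400000)*Y^23*a^8*x^4*Y1 + (-50331648)*Y^23*a^13*x^3*Y1 + (-6400000000)*Y^24*a^7*x^4*Y1 + (450560000)*Y^24*a^8*x^3 + (-524288000)*Y^24*a^12*x^3*Y1 + (25165824)*Y^24*a^13*x^2 + (-29120000000)*Y^25*a^6*x^4*Y1 + (4505600000)*Y^25*a^7*x^3 + (-2385510400)*Y^25*a^11*x^3*Y1 + (251658240)*Y^25*a^12*x^2 + (-75600000000)*Y^26*a^5*x^4*Y1 + (19712000000)*Y^26*a^6*x^3 + (-6193152000)*Y^26*a^10*x^3*Y1 + (1101004800)*Y^26*a^11*x^2 + (-122500000000)*Y^27*a^4*x^4*Y1 + (49280000000)*Y^27*a^5*x^3 + (-10035200000)*Y^27*a^9*x^3*Y1 + (2752512000)*Y^27*a^10*x^2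 + (-126875000000)*Y^28*a^3*x^4*Y1 + (77000000000)*Y^28*a^4*x^3 + (-10393600000)*Y^28*a^8*x^3*Y1 + (4300800000)*Y^28*a^9*x^2 + (-82031250000)*Y^29*a^2*x^4*Y1 + (77000000000)*Y^29*a^3*x^3 + (-6720000000)*Y^29*a^7*x^3*Y1 + (4300800000)*Y^29*a^8*x^2 + (-30273437500)*Y^30*a*x^4*Y1 + (48125000000)*Y^30*a^2*x^3 + (-2480000000)*Y^30*a^6*x^3*Y1 + (2688000000)*Y^30*a^7*x^2 + (-4882812500)*Y^31*x^4*Y1 + (17187500000)*Y^31*a*x^3 + (-400000000)*Y^31*a^5*x^3*Y1 + (960000000)*Y^31*a^6*x^2 + (2685546875)*Y^32*x^3 + (150000000)*Y^32*a^5*x^2) * e4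
      + ((40960000)*Y^24*a^8*x^4 + (16777216/5)*Y^24*a^13*x^3 + (409600000)*Y^25*a^7*x^4 + (33554432)*Y^25*a^12*x^3 + (1792000000)*Y^26*a^6*x^4 + (146800640)*Y^26*a^11*x^3 + (4480000000)*Y^27*a^5*x^4 + (367001600)*Y^27*a^10*x^3 + (7000000000)*Y^28*a^4*x^4 + (573440000)*Y^28*a^9*x^3 + (7000000000)*Y^29*a^3*x^4 + (573440000)*Y^29*a^8*x^3 + (4375000000)*Y^30*a^2*x^4 + (358400000)*Y^30*a^7*x^3 + (1562500000)*Y^31*a*x^4 + (128000000)*Y^31*a^6*x^3 + (244140625)*Y^32*x^4 + (20000000)*Y^32*a^5*x^3) * e5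
  rcases mul_eq_zero.1 h9 with h | h
  · exact absurd h (pow_ne_zero _ hq)
  · exact h


theorem stmt6 (a x₀ : ℂ) (hx₀ : x₀ ≠ 0) (hd : 256 * a ^ 5 + 3125 * x₀ ≠ 0)
    (y : ℂ → ℂ) (hy : AnalyticAt ℂ y x₀)
    (halg : ∀ᶠ x in nhds x₀, (y x) ^ 5 + a * (y x) ^ 4 + x = 0) :
    ∀ᶠ x in nhds x₀,
      ((256 / 5 : ℂ) * a ^ 5 * x ^ 3 + 625 * x ^ 4) * iteratedDeriv 5 y x
        + (384 * a ^ 5 * x ^ 2 + 6875 * x ^ 3) * iteratedDeriv 4 y x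
        + (624 * a ^ 5 * x + 19500 * x ^ 2) * iteratedDeriv 3 y x
        + (168 * a ^ 5 + 14100 * x) * iteratedDeriv 2 y x
        + 1344 * deriv y x = 0 := by
  have hso : IsOpen {z : ℂ | AnalyticAt ℂ y z} := isOpen_analyticAt ℂ y
  have hs0 : AnalyticOnNhd ℂ y {z : ℂ | AnalyticAt ℂ y z} := fun z hz => hz
  have hs1 := hs0.deriv
  have hs2 := hs1.deriv
  have hs3 := hs2.deriv
  have hs4 := hs3.deriv
  have hmem : ∀ᶠ x in nhds x₀, x ∈ {z : ℂ | AnalyticAt ℂ y z} :=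
    hso.mem_nhds hy
  have ha : ∀ᶠ x in nhds x₀, AnalyticAt ℂ y x := hmem.mono fun z hz => hs0 z hz
  have ha1 : ∀ᶠ x in nhds x₀, AnalyticAt ℂ (deriv y) x := hmem.mono fun z hz => hs1 z hz
  have ha2 : ∀ᶠ x in nhds x₀, AnalyticAt ℂ (deriv (deriv y)) x :=
    hmem.mono fun z hz => hs2 z hz
  have ha3 : ∀ᶠ x in nhds x₀, AnalyticAt ℂ (deriv (deriv (deriv y))) x :=
    hmem.mono fun z hz => hs3 z hz
  have ha4 : ∀ᶠ x in nhds x₀, AnalyticAt ℂ (deriv (deriv (deriv (deriv y)))) x :=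
    hmem.mono fun z hz => hs4 z hz
  have hxne : ∀ᶠ x in nhds x₀, x ≠ 0 := eventually_ne_nhds hx₀
  have hdne : ∀ᶠ x in nhds x₀, 256 * a ^ 5 + 3125 * x ≠ 0 := by
    have hc : ContinuousAt (fun x : ℂ => 256 * a ^ 5 + 3125 * x) x₀ := by fun_prop
    exact hc.eventually_ne hd
  have hne : ∀ᶠ x in nhds x₀, 5*(y x)^4 + 4*a*(y x)^3 ≠ 0 := by
    filter_upwards [halg, hxne, hdne] with x h hx hdx
    intro hq0
    rcases mul_eq_zero.1 (show (y x)^3*(5*y x+4*a) = 0 by linear_combination hq0) with h3 | h5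
    · have hy0 : y x = 0 := by
        exact pow_eq_zero_iff (by norm_num) |>.1 h3
      exact hx (by linear_combination h + (-(y x)^4 - a*(y x)^3)*hy0)
    · exact hdx (by linear_combination 3125*h
        + (-625*(y x)^4 - 125*a*(y x)^3 + 100*a^2*(y x)^2 - 80*a^3*(y x) + 64*a^4)*h5)
  -- E1
  have E1ev : ∀ᶠ x in nhds x₀, (5*(y x)^4+4*a*(y x)^3) * deriv y x + 1 = 0 := by
    have halg' : (fun x => (y x)^5 + a*(y x)^4 + x) =ᶠ[nhds x₀] (fun _ => 0) := halg
    have hd0 := halg'.deriv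
    rw [deriv_const'] at hd0
    filter_upwards [hd0, ha] with x h0 hx
    have hY : HasDerivAt y (deriv y x) x := hx.differentiableAt.hasDerivAt
    have H := ((hY.pow 5).add ((hY.pow 4).const_mul a)).add (hasDerivAt_id' (𝕜 := ℂ) x)
    have hv := H.deriv
    linear_combination h0 - hv
  -- E2
  have E2ev : ∀ᶠ x in nhds x₀, (5*(y x)^4+4*a*(y x)^3) * deriv (deriv y) x
      + (20*(y x)^3+12*a*(y x)^2) * (deriv y x)^2 = 0 := by
    have hE1 : (fun x => (5*(y x)^4+4*a*(y x)^3) * deriv y x + 1)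
        =ᶠ[nhds x₀] (fun _ => 0) := E1ev
    have hd1 := hE1.deriv
    rw [deriv_const'] at hd1
    filter_upwards [hd1, ha, ha1] with x h0 hx hx1
    have hY : HasDerivAt y (deriv y x) x := hx.differentiableAt.hasDerivAt
    have hY1 : HasDerivAt (deriv y) (deriv (deriv y) x) x := hx1.differentiableAt.hasDerivAt
    have P := ((hY.pow 4).const_mul 5).add ((hY.pow 3).const_mul (4*a))
    have H := (P.mul hY1).add_const 1
    have hv := H.deriv
    simp only [Pi.add_apply, Pi.mul_apply, Pi.pow_apply] at hv
    linear_combination h0 - hv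
  -- E3
  have E3ev : ∀ᶠ x in nhds x₀, (5*(y x)^4+4*a*(y x)^3) * deriv (deriv (deriv y)) x
      + 3*(20*(y x)^3+12*a*(y x)^2) * deriv y x * deriv (deriv y) x
      + (60*(y x)^2+24*a*y x) * (deriv y x)^3 = 0 := by
    have hE2 : (fun x => (5*(y x)^4+4*a*(y x)^3) * deriv (deriv y) x
        + (20*(y x)^3+12*a*(y x)^2) * (deriv y x)^2) =ᶠ[nhds x₀] (fun _ => 0) := E2ev
    have hd2 := hE2.deriv
    rw [deriv_const'] at hd2
    filter_upwards [hd2, ha, ha1, ha2] with x h0 hx hx1 hx2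
    have hY : HasDerivAt y (deriv y x) x := hx.differentiableAt.hasDerivAt
    have hY1 : HasDerivAt (deriv y) (deriv (deriv y) x) x := hx1.differentiableAt.hasDerivAt
    have hY2 : HasDerivAt (deriv (deriv y)) (deriv (deriv (deriv y)) x) x :=
      hx2.differentiableAt.hasDerivAt
    have P := ((hY.pow 4).const_mul 5).add ((hY.pow 3).const_mul (4*a))
    have Q := ((hY.pow 3).const_mul 20).add ((hY.pow 2).const_mul (12*a))
    have H := (P.mul hY2).add (Q.mul (hY1.pow 2))
    have hv := H.deriv
    simp only [Pi.add_apply, Pi.mul_apply, Pi.pow_apply] at hv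
    linear_combination h0 - hv
  -- E4
  have E4ev : ∀ᶠ x in nhds x₀, (5*(y x)^4+4*a*(y x)^3) * deriv (deriv (deriv (deriv y))) x
      + 4*(20*(y x)^3+12*a*(y x)^2) * deriv y x * deriv (deriv (deriv y)) x
      + 3*(20*(y x)^3+12*a*(y x)^2) * (deriv (deriv y) x)^2
      + 6*(60*(y x)^2+24*a*y x) * (deriv y x)^2 * deriv (deriv y) x
      + (120*y x+24*a) * (deriv y x)^4 = 0 := by
    have hE3 : (fun x => (5*(y x)^4+4*a*(y x)^3) * deriv (deriv (deriv y)) x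
        + 3*(20*(y x)^3+12*a*(y x)^2) * deriv y x * deriv (deriv y) x
        + (60*(y x)^2+24*a*y x) * (deriv y x)^3) =ᶠ[nhds x₀] (fun _ => 0) := E3ev
    have hd3 := hE3.deriv
    rw [deriv_const'] at hd3
    filter_upwards [hd3, ha, ha1, ha2, ha3] with x h0 hx hx1 hx2 hx3
    have hY : HasDerivAt y (deriv y x) x := hx.differentiableAt.hasDerivAt
    have hY1 : HasDerivAt (deriv y) (deriv (deriv y) x) x := hx1.differentiableAt.hasDerivAt
    have hY2 : HasDerivAt (deriv (deriv y)) (deriv (deriv (deriv y)) x) x :=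
      hx2.differentiableAt.hasDerivAt
    have hY3 : HasDerivAt (deriv (deriv (deriv y))) (deriv (deriv (deriv (deriv y))) x) x :=
      hx3.differentiableAt.hasDerivAt
    have P := ((hY.pow 4).const_mul 5).add ((hY.pow 3).const_mul (4*a))
    have Q := ((hY.pow 3).const_mul 20).add ((hY.pow 2).const_mul (12*a))
    have R := ((hY.pow 2).const_mul 60).add (hY.const_mul (24*a))
    have T1 := P.mul hY3
    have T2 := ((Q.const_mul 3).mul hY1).mul hY2
    have T3 := R.mul (hY1.pow 3)
    have H := (T1.add T2).add T3
    have hv := H.deriv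
    simp only [Pi.add_apply, Pi.mul_apply, Pi.pow_apply] at hv
    linear_combination h0 - hv
  -- E5
  have E5ev : ∀ᶠ x in nhds x₀,
      (5*(y x)^4+4*a*(y x)^3) * deriv (deriv (deriv (deriv (deriv y)))) x
      + 5*(20*(y x)^3+12*a*(y x)^2) * deriv y x * deriv (deriv (deriv (deriv y))) x
      + 10*(20*(y x)^3+12*a*(y x)^2) * deriv (deriv y) x * deriv (deriv (deriv y)) x
      + 10*(60*(y x)^2+24*a*y x) * (deriv y x)^2 * deriv (deriv (deriv y)) x
      + 15*(60*(y x)^2+24*a*y x) * deriv y x * (deriv (deriv y) x)^2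
      + 10*(120*y x+24*a) * (deriv y x)^3 * deriv (deriv y) x
      + 120 * (deriv y x)^5 = 0 := by
    have hE4 : (fun x => (5*(y x)^4+4*a*(y x)^3) * deriv (deriv (deriv (deriv y))) x
        + 4*(20*(y x)^3+12*a*(y x)^2) * deriv y x * deriv (deriv (deriv y)) x
        + 3*(20*(y x)^3+12*a*(y x)^2) * (deriv (deriv y) x)^2
        + 6*(60*(y x)^2+24*a*y x) * (deriv y x)^2 * deriv (deriv y) x
        + (120*y x+24*a) * (deriv y x)^4) =ᶠ[nhds x₀] (fun _ => 0) := E4ev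
    have hd4 := hE4.deriv
    rw [deriv_const'] at hd4
    filter_upwards [hd4, ha, ha1, ha2, ha3, ha4] with x h0 hx hx1 hx2 hx3 hx4
    have hY : HasDerivAt y (deriv y x) x := hx.differentiableAt.hasDerivAt
    have hY1 : HasDerivAt (deriv y) (deriv (deriv y) x) x := hx1.differentiableAt.hasDerivAt
    have hY2 : HasDerivAt (deriv (deriv y)) (deriv (deriv (deriv y)) x) x :=
      hx2.differentiableAt.hasDerivAt
    have hY3 : HasDerivAt (deriv (deriv (deriv y))) (deriv (deriv (deriv (deriv y))) x) x :=
      hx3.differentiableAt.hasDerivAt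
    have hY4 : HasDerivAt (deriv (deriv (deriv (deriv y))))
        (deriv (deriv (deriv (deriv (deriv y)))) x) x := hx4.differentiableAt.hasDerivAt
    have P := ((hY.pow 4).const_mul 5).add ((hY.pow 3).const_mul (4*a))
    have Q := ((hY.pow 3).const_mul 20).add ((hY.pow 2).const_mul (12*a))
    have R := ((hY.pow 2).const_mul 60).add (hY.const_mul (24*a))
    have S := (hY.const_mul 120).add_const (24*a)
    have T1 := P.mul hY4
    have T2 := ((Q.const_mul 4).mul hY1).mul hY3
    have T3 := (Q.const_mul 3).mul (hY2.pow 2)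
    have T4 := ((R.const_mul 6).mul (hY1.pow 2)).mul hY2
    have T5 := S.mul (hY1.pow 4)
    have H := (((T1.add T2).add T3).add T4).add T5
    have hv := H.deriv
    simp only [Pi.add_apply, Pi.mul_apply, Pi.pow_apply] at hv
    linear_combination h0 - hv
  -- conclude
  have i2 : iteratedDeriv 2 y = deriv (deriv y) := by
    rw [show (2:ℕ) = 1+1 from rfl, iteratedDeriv_succ, iteratedDeriv_one]
  have i3 : iteratedDeriv 3 y = deriv (deriv (deriv y)) := by
    rw [show (3:ℕ) = 2+1 from rfl, iteratedDeriv_succ, i2]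
  have i4 : iteratedDeriv 4 y = deriv (deriv (deriv (deriv y))) := by
    rw [show (4:ℕ) = 3+1 from rfl, iteratedDeriv_succ, i3]
  have i5 : iteratedDeriv 5 y = deriv (deriv (deriv (deriv (deriv y)))) := by
    rw [show (5:ℕ) = 4+1 from rfl, iteratedDeriv_succ, i4]
  filter_upwards [halg, hne, E1ev, E2ev, E3ev, E4ev, E5ev] with x h0 hq e1 e2 e3 e4 e5
  rw [i2, i3, i4, i5]
  exact key a x (y x) (deriv y x) (deriv (deriv y) x) (deriv (deriv (deriv y)) x)
    (deriv (deriv (deriv (deriv y))) x) (deriv (deriv (deriv (deriv (deriv y)))) x)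
    hq h0 e1 e2 e3 e4 e5
end

section
/- Let y be holomorphic in the variables (x₀, x₁, …, x_n) near a point where it satisfies the generic algebraic equation x_n y^n + x_{n−1} y^{n−1} + ⋯ + x₁ y + x₀ = 0 with nonvanishing discriminant. Then y satisfies the Euler equations ∑_{i=0}^n i·x_i·(∂y/∂x_i) = −y and ∑_{i=0}^n x_i·(∂y/∂x_i) = 0. -/
theorem stmt7 (n : ℕ) (hn : 2 ≤ n) (U : Set (Fin (n + 1) → ℂ)) (hU : IsOpen U)
    (y : (Fin (n + 1) → ℂ) → ℂ) (hy : DifferentiableOn ℂ y U)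
    (halg : ∀ x ∈ U, ∑ i : Fin (n + 1), x i * (y x) ^ (i : ℕ) = 0)
    (hdisc : ∀ x ∈ U, ∑ i : Fin (n + 1), (i : ℕ) * x i * (y x) ^ ((i : ℕ) - 1) ≠ 0) :
    ∀ x ∈ U,
      (∑ i : Fin (n + 1), (i : ℕ) * x i * fderiv ℂ y x (Pi.single i 1) = - y x) ∧
      (∑ i : Fin (n + 1), x i * fderiv ℂ y x (Pi.single i 1) = 0) := by
  intro x hx
  have hx' : U ∈ nhds x := hU.mem_nhds hx
  have hL : HasFDerivAt y (fderiv ℂ y x) x := (hy.differentiableAt hx').hasFDerivAt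
  set L := fderiv ℂ y x with hLdef
  set D : ℂ := ∑ j : Fin (n+1), (j:ℕ) * x j * y x ^ ((j:ℕ)-1) with hD
  have hDne : D ≠ 0 := hdisc x hx
  have hterm : ∀ j : Fin (n+1), HasFDerivAt (fun z : Fin (n+1) → ℂ => z j * y z ^ (j:ℕ))
      (x j • ((((j:ℕ):ℂ) * y x ^ ((j:ℕ)-1)) • L) + y x ^ (j:ℕ) •
        (ContinuousLinearMap.proj j : (Fin (n+1) → ℂ) →L[ℂ] ℂ)) x := by
    intro j
    have hp : HasFDerivAt (fun z : Fin (n+1) → ℂ => y z ^ (j:ℕ))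
        ((((j:ℕ):ℂ) * y x ^ ((j:ℕ)-1)) • L) x :=
      (hasDerivAt_pow (j:ℕ) (y x)).comp_hasFDerivAt x hL
    exact ((ContinuousLinearMap.proj j : (Fin (n+1) → ℂ) →L[ℂ] ℂ).hasFDerivAt).mul hp
  have hg : HasFDerivAt (fun z : Fin (n+1) → ℂ => ∑ j : Fin (n+1), z j * y z ^ (j:ℕ))
      (∑ j : Fin (n+1), (x j • ((((j:ℕ):ℂ) * y x ^ ((j:ℕ)-1)) • L) + y x ^ (j:ℕ) •
        (ContinuousLinearMap.proj j : (Fin (n+1) → ℂ) →L[ℂ] ℂ))) x :=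
    HasFDerivAt.fun_sum fun j _ => hterm j
  have hg0 : HasFDerivAt (fun z : Fin (n+1) → ℂ => ∑ j : Fin (n+1), z j * y z ^ (j:ℕ))
      0 x :=
    (hasFDerivAt_const (𝕜 := ℂ) (0:ℂ) x).congr_of_eventuallyEq (Filter.eventuallyEq_of_mem hx' halg)
  have hEq := hg.unique hg0
  have key : ∀ i : Fin (n+1), D * L (Pi.single i 1) = - (y x ^ (i:ℕ)) := by
    intro i
    have h1 := congrArg (fun T : (Fin (n+1) → ℂ) →L[ℂ] ℂ => T (Pi.single i 1)) hEq
    simp only [ContinuousLinearMap.coe_sum', Finset.sum_apply,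
      ContinuousLinearMap.add_apply, ContinuousLinearMap.smul_apply,
      ContinuousLinearMap.proj_apply, ContinuousLinearMap.zero_apply,
      smul_eq_mul, Pi.single_apply, Finset.sum_add_distrib, mul_ite, mul_one, mul_zero,
      Finset.sum_ite_eq', Finset.mem_univ, if_true] at h1
    have h2 : ∑ j : Fin (n+1), x j * (((j:ℕ):ℂ) * y x ^ ((j:ℕ)-1) * L (Pi.single i 1))
        = D * L (Pi.single i 1) := by
      rw [hD, Finset.sum_mul]
      exact Finset.sum_congr rfl fun j _ => by ring
    linear_combination h1 - h2
  have hsum1 : ∑ j : Fin (n+1), ((j:ℕ):ℂ) * x j * y x ^ (j:ℕ) = y x * D := by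
    rw [hD, Finset.mul_sum]
    refine Finset.sum_congr rfl fun j _ => ?_
    rcases Nat.eq_zero_or_pos (j:ℕ) with h | h
    · simp [h]
    · obtain ⟨k, hk⟩ := Nat.exists_eq_succ_of_ne_zero (Nat.pos_iff_ne_zero.mp h)
      rw [hk]
      push_cast
      rw [pow_succ]
      ring
  constructor
  · apply mul_left_cancel₀ hDne
    rw [Finset.mul_sum]
    have : ∀ j : Fin (n+1), D * (((j:ℕ):ℂ) * x j * L (Pi.single j 1))
        = -(((j:ℕ):ℂ) * x j * y x ^ (j:ℕ)) := fun j => by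
      linear_combination (((j:ℕ):ℂ) * x j) * key j
    rw [Finset.sum_congr rfl fun j _ => this j, Finset.sum_neg_distrib, hsum1]
    ring
  · apply mul_left_cancel₀ hDne
    rw [Finset.mul_sum]
    have : ∀ j : Fin (n+1), D * (x j * L (Pi.single j 1))
        = -(x j * y x ^ (j:ℕ)) := fun j => by
      linear_combination (x j) * key j
    rw [Finset.sum_congr rfl fun j _ => this j, Finset.sum_neg_distrib, halg x hx]
    ring
end

section
/- Let y be holomorphic in (x₀, …, x_n) near a point with ∑_{i=0}^n x_i y^i = 0 and ∑_{i=1}^n i x_i y^{i−1} ≠ 0. Then for any indices i, j, k, l ∈ {0,…,n} with i + j = k + l, the mixed second partials satisfy ∂²y/∂x_i∂x_j = ∂²y/∂x_k∂x_l. -/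
noncomputable def Dd (n : ℕ) (y : (Fin (n+1) → ℂ) → ℂ) (z : Fin (n+1) → ℂ) : ℂ :=
  ∑ m : Fin (n+1), ((m:ℕ):ℂ) * z m * y z ^ ((m:ℕ) - 1)

noncomputable def Ee (n : ℕ) (y : (Fin (n+1) → ℂ) → ℂ) (z : Fin (n+1) → ℂ) : ℂ :=
  ∑ m : Fin (n+1), ((m:ℕ):ℂ) * (((m:ℕ) - 1 : ℕ):ℂ) * z m * y z ^ ((m:ℕ) - 1 - 1)

lemma cpow_aux (a b : ℕ) (c : ℂ) : (a:ℂ) * c^(a-1) * c^b = (a:ℂ) * c^(a+b-1) := by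
  cases a with
  | zero => simp
  | succ a => rw [mul_assoc, ← pow_add, Nat.succ_sub_one, Nat.succ_add, Nat.succ_sub_one]

lemma stmt8_aux1 (n : ℕ) (U : Set (Fin (n + 1) → ℂ)) (hU : IsOpen U)
    (y : (Fin (n + 1) → ℂ) → ℂ) (hy : AnalyticOn ℂ y U)
    (halg : ∀ x ∈ U, ∑ i : Fin (n + 1), x i * (y x) ^ (i : ℕ) = 0)
    (hdisc : ∀ x ∈ U, ∑ i : Fin (n + 1), (i : ℕ) * x i * (y x) ^ ((i : ℕ) - 1) ≠ 0)
    (a : Fin (n+1)) (z : Fin (n+1) → ℂ) (hz : z ∈ U) :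
    fderiv ℂ y z (Pi.single a 1) = (-(y z ^ (a:ℕ))) * (Dd n y z)⁻¹ := by
  have hy' : DifferentiableAt ℂ y z := (hy.differentiableOn z hz).differentiableAt (hU.mem_nhds hz)
  have hF : HasFDerivAt (fun w => ∑ m : Fin (n+1), w m * y w ^ (m:ℕ))
      (∑ m : Fin (n+1), ((z m) • (((m:ℕ):ℂ) * y z ^ ((m:ℕ)-1)) • fderiv ℂ y z
        + (y z ^ (m:ℕ)) • ContinuousLinearMap.proj m)) z :=
    HasFDerivAt.fun_sum fun m _ => (ContinuousLinearMap.proj m).hasFDerivAt.mul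
      ((hasDerivAt_pow (m:ℕ) (y z)).comp_hasFDerivAt z hy'.hasFDerivAt)
  have h0 : fderiv ℂ (fun w => ∑ m : Fin (n+1), w m * y w ^ (m:ℕ)) z = 0 := by
    have heq : (fun w => ∑ m : Fin (n+1), w m * y w ^ (m:ℕ)) =ᶠ[nhds z] (fun _ => (0:ℂ)) :=
      Filter.eventuallyEq_of_mem (hU.mem_nhds hz) halg
    rw [heq.fderiv_eq, fderiv_fun_const]; rfl
  have hF0 : (∑ m : Fin (n+1), ((z m) • (((m:ℕ):ℂ) * y z ^ ((m:ℕ)-1)) • fderiv ℂ y z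
        + (y z ^ (m:ℕ)) • ContinuousLinearMap.proj m)) = 0 := by
    rw [← hF.fderiv]; exact h0
  have hev := congrArg (fun (L : (Fin (n+1) → ℂ) →L[ℂ] ℂ) => L (Pi.single a 1)) hF0
  simp only [ContinuousLinearMap.sum_apply, ContinuousLinearMap.add_apply,
    ContinuousLinearMap.smul_apply, ContinuousLinearMap.proj_apply,
    ContinuousLinearMap.zero_apply, smul_eq_mul] at hev
  rw [Finset.sum_add_distrib] at hev
  have e1 : ∑ m : Fin (n+1), y z ^ (m:ℕ) * (Pi.single a 1 : Fin (n+1) → ℂ) m = y z ^ (a:ℕ) := by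
    simp [Pi.single_apply]
  have e2 : ∑ m : Fin (n+1), z m * (((m:ℕ):ℂ) * y z ^ ((m:ℕ)-1) * fderiv ℂ y z (Pi.single a 1))
      = (∑ m : Fin (n+1), ((m:ℕ):ℂ) * z m * y z ^ ((m:ℕ)-1)) * fderiv ℂ y z (Pi.single a 1) := by
    rw [Finset.sum_mul]; exact Finset.sum_congr rfl fun m _ => by ring
  rw [e1, e2] at hev
  have hD : Dd n y z ≠ 0 := hdisc z hz
  rw [eq_mul_inv_iff_mul_eq₀ hD, mul_comm]
  exact eq_neg_of_add_eq_zero_left hev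

lemma stmt8_key (n : ℕ) (U : Set (Fin (n + 1) → ℂ)) (hU : IsOpen U)
    (y : (Fin (n + 1) → ℂ) → ℂ) (hy : AnalyticOn ℂ y U)
    (halg : ∀ x ∈ U, ∑ i : Fin (n + 1), x i * (y x) ^ (i : ℕ) = 0)
    (hdisc : ∀ x ∈ U, ∑ i : Fin (n + 1), (i : ℕ) * x i * (y x) ^ ((i : ℕ) - 1) ≠ 0)
    (a b : Fin (n+1)) (x : Fin (n+1) → ℂ) (hx : x ∈ U) :
    fderiv ℂ (fun z => fderiv ℂ y z (Pi.single a 1)) x (Pi.single b 1)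
      = ((((a:ℕ)+(b:ℕ) : ℕ):ℂ) * y x ^ ((a:ℕ)+(b:ℕ)-1)
          - Ee n y x * y x ^ ((a:ℕ)+(b:ℕ)) / Dd n y x) / (Dd n y x) ^ 2 := by
  have hy' : DifferentiableAt ℂ y x := (hy.differentiableOn x hx).differentiableAt (hU.mem_nhds hx)
  have hD : Dd n y x ≠ 0 := hdisc x hx
  -- replace inner function by the explicit formula
  have heq : (fun z => fderiv ℂ y z (Pi.single a 1))
      =ᶠ[nhds x] (fun z => (-(y z ^ (a:ℕ))) * (Dd n y z)⁻¹) :=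
    Filter.eventuallyEq_of_mem (hU.mem_nhds hx)
      (fun z hz => stmt8_aux1 n U hU y hy halg hdisc a z hz)
  rw [heq.fderiv_eq]
  -- derivative of Dd
  have hDd : HasFDerivAt (fun z => ∑ m : Fin (n+1), ((m:ℕ):ℂ) * z m * y z ^ ((m:ℕ)-1))
      (∑ m : Fin (n+1), ((((m:ℕ):ℂ) * x m) • ((((m:ℕ)-1:ℕ):ℂ) * y x ^ ((m:ℕ)-1-1)) • fderiv ℂ y x
        + (y x ^ ((m:ℕ)-1)) • (((m:ℕ):ℂ) • ContinuousLinearMap.proj m))) x :=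
    HasFDerivAt.fun_sum fun m _ => ((ContinuousLinearMap.proj m).hasFDerivAt.const_mul ((m:ℕ):ℂ)).mul
      ((hasDerivAt_pow ((m:ℕ)-1) (y x)).comp_hasFDerivAt x hy'.hasFDerivAt)
  have hDd' : HasFDerivAt (Dd n y)
      (∑ m : Fin (n+1), ((((m:ℕ):ℂ) * x m) • ((((m:ℕ)-1:ℕ):ℂ) * y x ^ ((m:ℕ)-1-1)) • fderiv ℂ y x
        + (y x ^ ((m:ℕ)-1)) • (((m:ℕ):ℂ) • ContinuousLinearMap.proj m))) x := hDd
  set D' := (∑ m : Fin (n+1), ((((m:ℕ):ℂ) * x m) • ((((m:ℕ)-1:ℕ):ℂ) * y x ^ ((m:ℕ)-1-1)) • fderiv ℂ y x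
        + (y x ^ ((m:ℕ)-1)) • (((m:ℕ):ℂ) • ContinuousLinearMap.proj m))) with hD'def
  have hinv : HasFDerivAt (fun z => (Dd n y z)⁻¹) ((-((Dd n y x) ^ 2)⁻¹) • D') x :=
    (hasDerivAt_inv hD).comp_hasFDerivAt x hDd'
  have hpow : HasFDerivAt (fun z => -(y z ^ (a:ℕ)))
      (-((((a:ℕ):ℂ) * y x ^ ((a:ℕ)-1)) • fderiv ℂ y x)) x :=
    ((hasDerivAt_pow (a:ℕ) (y x)).comp_hasFDerivAt x hy'.hasFDerivAt).neg
  have hW := hpow.fun_mul hinv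
  rw [hW.fderiv]
  -- evaluate the continuous linear map at Pi.single b 1
  simp only [hD'def, ContinuousLinearMap.add_apply, ContinuousLinearMap.smul_apply,
    ContinuousLinearMap.sum_apply, ContinuousLinearMap.neg_apply,
    ContinuousLinearMap.proj_apply, smul_eq_mul]
  have ub : fderiv ℂ y x (Pi.single b 1) = (-(y x ^ (b:ℕ))) * (Dd n y x)⁻¹ :=
    stmt8_aux1 n U hU y hy halg hdisc b x hx
  rw [ub]
  have e1 : ∑ m : Fin (n+1),
      (((m:ℕ):ℂ) * x m * ((((m:ℕ)-1:ℕ):ℂ) * y x ^ ((m:ℕ)-1-1) * ((-(y x ^ (b:ℕ))) * (Dd n y x)⁻¹))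
        + y x ^ ((m:ℕ)-1) * (((m:ℕ):ℂ) * (Pi.single b 1 : Fin (n+1) → ℂ) m))
      = Ee n y x * ((-(y x ^ (b:ℕ))) * (Dd n y x)⁻¹) + ((b:ℕ):ℂ) * y x ^ ((b:ℕ)-1) := by
    rw [Finset.sum_add_distrib]
    congr 1
    · rw [Ee, Finset.sum_mul]; exact Finset.sum_congr rfl fun m _ => by ring
    · simp [Pi.single_apply, mul_comm]
  rw [e1]
  -- final algebra
  have h1 : (((a:ℕ):ℂ)) * y x ^ ((a:ℕ)-1) * y x ^ (b:ℕ) = ((a:ℕ):ℂ) * y x ^ ((a:ℕ)+(b:ℕ)-1) :=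
    cpow_aux _ _ _
  have h2 : (((b:ℕ):ℂ)) * y x ^ ((b:ℕ)-1) * y x ^ (a:ℕ) = ((b:ℕ):ℂ) * y x ^ ((a:ℕ)+(b:ℕ)-1) := by
    rw [cpow_aux, Nat.add_comm (b:ℕ) (a:ℕ)]
  have h3 : y x ^ (a:ℕ) * y x ^ (b:ℕ) = y x ^ ((a:ℕ)+(b:ℕ)) := (pow_add _ _ _).symm
  push_cast
  field_simp
  linear_combination (Dd n y x) * h1 + (Dd n y x) * h2 - (Dd n y x)^5 * Ee n y x * h3

theorem stmt8 (n : ℕ) (U : Set (Fin (n + 1) → ℂ)) (hU : IsOpen U)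
    (y : (Fin (n + 1) → ℂ) → ℂ) (hy : AnalyticOn ℂ y U)
    (halg : ∀ x ∈ U, ∑ i : Fin (n + 1), x i * (y x) ^ (i : ℕ) = 0)
    (hdisc : ∀ x ∈ U, ∑ i : Fin (n + 1), (i : ℕ) * x i * (y x) ^ ((i : ℕ) - 1) ≠ 0)
    (i j k l : Fin (n + 1)) (hsum : (i : ℕ) + (j : ℕ) = (k : ℕ) + (l : ℕ)) :
    ∀ x ∈ U,
      fderiv ℂ (fun z => fderiv ℂ y z (Pi.single i 1)) x (Pi.single j 1) =
      fderiv ℂ (fun z => fderiv ℂ y z (Pi.single k 1)) x (Pi.single l 1) := by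
  intro x hx
  rw [stmt8_key n U hU y hy halg hdisc i j x hx, stmt8_key n U hU y hy halg hdisc k l x hx, hsum]
end

section
/- Let y be holomorphic near x₀ ∈ ℂ satisfying y(x)⁵ + 2y(x)⁴ − 3y(x)³ + y(x)² + 5y(x) + x = 0 near x₀, with 5y(x₀)⁴ + 8y(x₀)³ − 9y(x₀)² + 2y(x₀) + 5 ≠ 0. Then y has vanishing image under the fifth-order differential operator with polynomial coefficients: (−43728190560 + 795819153x − 53446888x² + 56028x³)(−1585575 + 71982x + 281583x² + 81342x³ + 3125x⁴) y⁽⁵⁾ + 15(−650327879439783 − 5747872136026563x − 2400588229818366x² − 91559102743545x³ − 304019551433x⁴ − 131338505212x⁵ + 128397500x⁶) y⁽⁴⁾ + 60(−1821690090417321 − 1560609625036728x − 98711280942848x² + 721492325057x³ − 103787727624x⁴ + 91045500x⁵) y⁽³⁾ + 180(−282046871305467 − 38794189010031x + 478890241959x² − 28458003540x³ + 21944300x⁴) y⁽²⁾ + 720(−1756652589603 + 23053844253x − 812236372x² + 522928x³) y′ = 0 near x₀. -/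
set_option maxHeartbeats 4000000 in
theorem stmt13 (x₀ : ℂ) (y : ℂ → ℂ) (hy : AnalyticAt ℂ y x₀)
    (halg : ∀ᶠ x in nhds x₀,
      (y x) ^ 5 + 2 * (y x) ^ 4 - 3 * (y x) ^ 3 + (y x) ^ 2 + 5 * y x + x = 0)
    (hdisc : 5 * (y x₀) ^ 4 + 8 * (y x₀) ^ 3 - 9 * (y x₀) ^ 2 + 2 * y x₀ + 5 ≠ 0) :
    ∀ᶠ x in nhds x₀,
      (-43728190560 + 795819153 * x - 53446888 * x ^ 2 + 56028 * x ^ 3) *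
        (-1585575 + 71982 * x + 281583 * x ^ 2 + 81342 * x ^ 3 + 3125 * x ^ 4) *
        iteratedDeriv 5 y x
      + 15 * (-650327879439783 - 5747872136026563 * x - 2400588229818366 * x ^ 2
          - 91559102743545 * x ^ 3 - 304019551433 * x ^ 4 - 131338505212 * x ^ 5
          + 128397500 * x ^ 6) * iteratedDeriv 4 y x
      + 60 * (-1821690090417321 - 1560609625036728 * x - 98711280942848 * x ^ 2
          + 721492325057 * x ^ 3 - 103787727624 * x ^ 4 + 91045500 * x ^ 5) *
          iteratedDeriv 3 y x
      + 180 * (-282046871305467 - 38794189010031 * x + 478890241959 * x ^ 2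
          - 28458003540 * x ^ 3 + 21944300 * x ^ 4) * iteratedDeriv 2 y x
      + 720 * (-1756652589603 + 23053844253 * x - 812236372 * x ^ 2
          + 522928 * x ^ 3) * deriv y x = 0 := by
  have hA : ∀ᶠ z in nhds x₀, AnalyticAt ℂ y z ∧ AnalyticAt ℂ (deriv y) z
      ∧ AnalyticAt ℂ (deriv (deriv y)) z ∧ AnalyticAt ℂ (deriv (deriv (deriv y))) z
      ∧ AnalyticAt ℂ (deriv (deriv (deriv (deriv y)))) z := by
    have hs : IsOpen {z | AnalyticAt ℂ y z} := isOpen_analyticAt ℂ y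
    have a0 : AnalyticOnNhd ℂ y {z | AnalyticAt ℂ y z} := fun z hz => hz
    have a1 := a0.deriv
    have a2 := a1.deriv
    have a3 := a2.deriv
    have a4 := a3.deriv
    filter_upwards [hs.mem_nhds hy] with z hz
    exact ⟨a0 z hz, a1 z hz, a2 z hz, a3 z hz, a4 z hz⟩
  have h1 : ∀ᶠ x in nhds x₀,
      (5*(y x)^4+8*(y x)^3-9*(y x)^2+2*(y x)+5) * deriv y x + 1 = 0 := by
    filter_upwards [halg.eventually_nhds, hA] with x hx hz
    have Hy : HasDerivAt y (deriv y x) x := hz.1.differentiableAt.hasDerivAt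
    have HG : HasDerivAt (fun z => (y z)^5 + 2*(y z)^4 - 3*(y z)^3 + (y z)^2 + 5*y z + z)
        ((5*(y x)^4+8*(y x)^3-9*(y x)^2+2*(y x)+5) * deriv y x + 1) x := by
      exact ((((((Hy.pow 5).add ((Hy.pow 4).const_mul 2)).sub ((Hy.pow 3).const_mul 3)).add
        (Hy.pow 2)).add (Hy.const_mul 5)).add (hasDerivAt_id x)).congr_deriv (by push_cast; ring)
    have h0 : (fun z => (y z)^5 + 2*(y z)^4 - 3*(y z)^3 + (y z)^2 + 5*y z + z)
        =ᶠ[nhds x] (fun _ => 0) := hx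
    rw [← HG.deriv, h0.deriv_eq]; simp
  have h2 : ∀ᶠ x in nhds x₀,
      (20*(y x)^3+24*(y x)^2-18*(y x)+2)*(deriv y x)^2
      + (5*(y x)^4+8*(y x)^3-9*(y x)^2+2*(y x)+5)*(deriv (deriv y) x) = 0 := by
    filter_upwards [h1.eventually_nhds, hA] with x hx hz
    have Hy : HasDerivAt y (deriv y x) x := hz.1.differentiableAt.hasDerivAt
    have H1 : HasDerivAt (deriv y) (deriv (deriv y) x) x := hz.2.1.differentiableAt.hasDerivAt
    have DAraw := (((((Hy.pow 4).const_mul 5).add ((Hy.pow 3).const_mul 8)).sub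
      ((Hy.pow 2).const_mul 9)).add (Hy.const_mul 2)).add_const 5
    have HG : HasDerivAt (fun z => (5*(y z)^4+8*(y z)^3-9*(y z)^2+2*(y z)+5) * deriv y z + 1)
        ((20*(y x)^3+24*(y x)^2-18*(y x)+2)*(deriv y x)^2
          + (5*(y x)^4+8*(y x)^3-9*(y x)^2+2*(y x)+5)*(deriv (deriv y) x)) x := by
      exact ((DAraw.mul H1).add_const 1).congr_deriv (by simp only [Pi.add_apply, Pi.sub_apply, Pi.pow_apply]; push_cast; ring)
    have h0 : (fun z => (5*(y z)^4+8*(y z)^3-9*(y z)^2+2*(y z)+5) * deriv y z + 1)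
        =ᶠ[nhds x] (fun _ => 0) := hx
    rw [← HG.deriv, h0.deriv_eq]; simp
  have h3 : ∀ᶠ x in nhds x₀,
      (60*(y x)^2+48*(y x)-18)*(deriv y x)^3
      + 3*((20*(y x)^3+24*(y x)^2-18*(y x)+2)*(deriv y x*deriv (deriv y) x))
      + (5*(y x)^4+8*(y x)^3-9*(y x)^2+2*(y x)+5)*(deriv (deriv (deriv y)) x) = 0 := by
    filter_upwards [h2.eventually_nhds, hA] with x hx hz
    have Hy : HasDerivAt y (deriv y x) x := hz.1.differentiableAt.hasDerivAt
    have H1 : HasDerivAt (deriv y) (deriv (deriv y) x) x := hz.2.1.differentiableAt.hasDerivAt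
    have H2 : HasDerivAt (deriv (deriv y)) (deriv (deriv (deriv y)) x) x :=
      hz.2.2.1.differentiableAt.hasDerivAt
    have CAraw := ((((Hy.pow 3).const_mul 20).add ((Hy.pow 2).const_mul 24)).sub
      (Hy.const_mul 18)).add_const 2
    have DAraw := (((((Hy.pow 4).const_mul 5).add ((Hy.pow 3).const_mul 8)).sub
      ((Hy.pow 2).const_mul 9)).add (Hy.const_mul 2)).add_const 5
    have HG : HasDerivAt (fun z => (20*(y z)^3+24*(y z)^2-18*(y z)+2)*(deriv y z)^2
        + (5*(y z)^4+8*(y z)^3-9*(y z)^2+2*(y z)+5)*(deriv (deriv y) z))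
        ((60*(y x)^2+48*(y x)-18)*(deriv y x)^3
          + 3*((20*(y x)^3+24*(y x)^2-18*(y x)+2)*(deriv y x*deriv (deriv y) x))
          + (5*(y x)^4+8*(y x)^3-9*(y x)^2+2*(y x)+5)*(deriv (deriv (deriv y)) x)) x := by
      exact ((CAraw.mul (H1.pow 2)).add (DAraw.mul H2)).congr_deriv (by simp only [Pi.add_apply, Pi.sub_apply, Pi.pow_apply]; push_cast; ring)
    have h0 : (fun z => (20*(y z)^3+24*(y z)^2-18*(y z)+2)*(deriv y z)^2
        + (5*(y z)^4+8*(y z)^3-9*(y z)^2+2*(y z)+5)*(deriv (deriv y) z))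
        =ᶠ[nhds x] (fun _ => 0) := hx
    rw [← HG.deriv, h0.deriv_eq]; simp
  have h4 : ∀ᶠ x in nhds x₀,
      (120*(y x)+48)*(deriv y x)^4
      + 6*((60*(y x)^2+48*(y x)-18)*((deriv y x)^2*(deriv (deriv y) x)))
      + 3*((20*(y x)^3+24*(y x)^2-18*(y x)+2)*(deriv (deriv y) x)^2)
      + 4*((20*(y x)^3+24*(y x)^2-18*(y x)+2)*(deriv y x*deriv (deriv (deriv y)) x))
      + (5*(y x)^4+8*(y x)^3-9*(y x)^2+2*(y x)+5)*(deriv (deriv (deriv (deriv y))) x) = 0 := by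
    filter_upwards [h3.eventually_nhds, hA] with x hx hz
    have Hy : HasDerivAt y (deriv y x) x := hz.1.differentiableAt.hasDerivAt
    have H1 : HasDerivAt (deriv y) (deriv (deriv y) x) x := hz.2.1.differentiableAt.hasDerivAt
    have H2 : HasDerivAt (deriv (deriv y)) (deriv (deriv (deriv y)) x) x :=
      hz.2.2.1.differentiableAt.hasDerivAt
    have H3 : HasDerivAt (deriv (deriv (deriv y))) (deriv (deriv (deriv (deriv y))) x) x :=
      hz.2.2.2.1.differentiableAt.hasDerivAt
    have C3raw := (((Hy.pow 2).const_mul 60).add (Hy.const_mul 48)).sub_const 18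
    have CAraw := ((((Hy.pow 3).const_mul 20).add ((Hy.pow 2).const_mul 24)).sub
      (Hy.const_mul 18)).add_const 2
    have DAraw := (((((Hy.pow 4).const_mul 5).add ((Hy.pow 3).const_mul 8)).sub
      ((Hy.pow 2).const_mul 9)).add (Hy.const_mul 2)).add_const 5
    have HG : HasDerivAt (fun z => (60*(y z)^2+48*(y z)-18)*(deriv y z)^3
        + 3*((20*(y z)^3+24*(y z)^2-18*(y z)+2)*(deriv y z*deriv (deriv y) z))
        + (5*(y z)^4+8*(y z)^3-9*(y z)^2+2*(y z)+5)*(deriv (deriv (deriv y)) z))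
        ((120*(y x)+48)*(deriv y x)^4
          + 6*((60*(y x)^2+48*(y x)-18)*((deriv y x)^2*(deriv (deriv y) x)))
          + 3*((20*(y x)^3+24*(y x)^2-18*(y x)+2)*(deriv (deriv y) x)^2)
          + 4*((20*(y x)^3+24*(y x)^2-18*(y x)+2)*(deriv y x*deriv (deriv (deriv y)) x))
          + (5*(y x)^4+8*(y x)^3-9*(y x)^2+2*(y x)+5)*(deriv (deriv (deriv (deriv y))) x)) x := by
      exact (((C3raw.mul (H1.pow 3)).add ((CAraw.mul (H1.mul H2)).const_mul 3)).add
        (DAraw.mul H3)).congr_deriv (by simp only [Pi.add_apply, Pi.sub_apply, Pi.pow_apply, Pi.mul_apply]; push_cast; ring)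
    have h0 : (fun z => (60*(y z)^2+48*(y z)-18)*(deriv y z)^3
        + 3*((20*(y z)^3+24*(y z)^2-18*(y z)+2)*(deriv y z*deriv (deriv y) z))
        + (5*(y z)^4+8*(y z)^3-9*(y z)^2+2*(y z)+5)*(deriv (deriv (deriv y)) z))
        =ᶠ[nhds x] (fun _ => 0) := hx
    rw [← HG.deriv, h0.deriv_eq]; simp
  have h5 : ∀ᶠ x in nhds x₀,
      120*(deriv y x)^5
      + 10*(120*(y x)+48)*(deriv y x)^3*(deriv (deriv y) x)
      + 15*(60*(y x)^2+48*(y x)-18)*(deriv y x)*(deriv (deriv y) x)^2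
      + 10*(60*(y x)^2+48*(y x)-18)*(deriv y x)^2*(deriv (deriv (deriv y)) x)
      + 10*(20*(y x)^3+24*(y x)^2-18*(y x)+2)*(deriv (deriv y) x)*(deriv (deriv (deriv y)) x)
      + 5*(20*(y x)^3+24*(y x)^2-18*(y x)+2)*(deriv y x)*(deriv (deriv (deriv (deriv y))) x)
      + (5*(y x)^4+8*(y x)^3-9*(y x)^2+2*(y x)+5)*(deriv (deriv (deriv (deriv (deriv y)))) x)
        = 0 := by
    filter_upwards [h4.eventually_nhds, hA] with x hx hz
    have Hy : HasDerivAt y (deriv y x) x := hz.1.differentiableAt.hasDerivAt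
    have H1 : HasDerivAt (deriv y) (deriv (deriv y) x) x := hz.2.1.differentiableAt.hasDerivAt
    have H2 : HasDerivAt (deriv (deriv y)) (deriv (deriv (deriv y)) x) x :=
      hz.2.2.1.differentiableAt.hasDerivAt
    have H3 : HasDerivAt (deriv (deriv (deriv y))) (deriv (deriv (deriv (deriv y))) x) x :=
      hz.2.2.2.1.differentiableAt.hasDerivAt
    have H4 : HasDerivAt (deriv (deriv (deriv (deriv y))))
        (deriv (deriv (deriv (deriv (deriv y)))) x) x :=
      hz.2.2.2.2.differentiableAt.hasDerivAt
    have C4raw := (Hy.const_mul 120).add_const 48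
    have C3raw := (((Hy.pow 2).const_mul 60).add (Hy.const_mul 48)).sub_const 18
    have CAraw := ((((Hy.pow 3).const_mul 20).add ((Hy.pow 2).const_mul 24)).sub
      (Hy.const_mul 18)).add_const 2
    have DAraw := (((((Hy.pow 4).const_mul 5).add ((Hy.pow 3).const_mul 8)).sub
      ((Hy.pow 2).const_mul 9)).add (Hy.const_mul 2)).add_const 5
    have HG : HasDerivAt (fun z => (120*(y z)+48)*(deriv y z)^4
        + 6*((60*(y z)^2+48*(y z)-18)*((deriv y z)^2*(deriv (deriv y) z)))
        + 3*((20*(y z)^3+24*(y z)^2-18*(y z)+2)*(deriv (deriv y) z)^2)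
        + 4*((20*(y z)^3+24*(y z)^2-18*(y z)+2)*(deriv y z*deriv (deriv (deriv y)) z))
        + (5*(y z)^4+8*(y z)^3-9*(y z)^2+2*(y z)+5)*(deriv (deriv (deriv (deriv y))) z))
        (120*(deriv y x)^5
          + 10*(120*(y x)+48)*(deriv y x)^3*(deriv (deriv y) x)
          + 15*(60*(y x)^2+48*(y x)-18)*(deriv y x)*(deriv (deriv y) x)^2
          + 10*(60*(y x)^2+48*(y x)-18)*(deriv y x)^2*(deriv (deriv (deriv y)) x)
          + 10*(20*(y x)^3+24*(y x)^2-18*(y x)+2)*(deriv (deriv y) x)*(deriv (deriv (deriv y)) x)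
          + 5*(20*(y x)^3+24*(y x)^2-18*(y x)+2)*(deriv y x)*(deriv (deriv (deriv (deriv y))) x)
          + (5*(y x)^4+8*(y x)^3-9*(y x)^2+2*(y x)+5)*(deriv (deriv (deriv (deriv (deriv y)))) x))
        x := by
      exact (((((C4raw.mul (H1.pow 4)).add ((C3raw.mul ((H1.pow 2).mul H2)).const_mul 6)).add
        ((CAraw.mul (H2.pow 2)).const_mul 3)).add ((CAraw.mul (H1.mul H3)).const_mul 4)).add
        (DAraw.mul H4)).congr_deriv (by simp only [Pi.add_apply, Pi.sub_apply, Pi.pow_apply, Pi.mul_apply]; push_cast; ring)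
    have h0 : (fun z => (120*(y z)+48)*(deriv y z)^4
        + 6*((60*(y z)^2+48*(y z)-18)*((deriv y z)^2*(deriv (deriv y) z)))
        + 3*((20*(y z)^3+24*(y z)^2-18*(y z)+2)*(deriv (deriv y) z)^2)
        + 4*((20*(y z)^3+24*(y z)^2-18*(y z)+2)*(deriv y z*deriv (deriv (deriv y)) z))
        + (5*(y z)^4+8*(y z)^3-9*(y z)^2+2*(y z)+5)*(deriv (deriv (deriv (deriv y))) z))
        =ᶠ[nhds x] (fun _ => 0) := hx
    rw [← HG.deriv, h0.deriv_eq]; simp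
  have i2 : iteratedDeriv 2 y = deriv (deriv y) := by
    simp [iteratedDeriv_succ, iteratedDeriv_one]
  have i3 : iteratedDeriv 3 y = deriv (deriv (deriv y)) := by
    simp [iteratedDeriv_succ, iteratedDeriv_one]
  have i4 : iteratedDeriv 4 y = deriv (deriv (deriv (deriv y))) := by
    simp [iteratedDeriv_succ, iteratedDeriv_one]
  have i5 : iteratedDeriv 5 y = deriv (deriv (deriv (deriv (deriv y)))) := by
    simp [iteratedDeriv_succ, iteratedDeriv_one]
  filter_upwards [halg, h1, h2, h3, h4, h5] with x hrel e1 e2 e3 e4 e5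
  rw [i2, i3, i4, i5]
  have hD : (5*(y x)^4+8*(y x)^3-9*(y x)^2+2*(y x)+5) ≠ 0 := by
    intro h; rw [h] at e1; simp at e1
  have M1 : (deriv y x) * (5*(y x)^4+8*(y x)^3-9*(y x)^2+2*(y x)+5)^1 = ((-1)) := by
    linear_combination ((1)) * e1
  have M2 : (deriv (deriv y) x) * (5*(y x)^4+8*(y x)^3-9*(y x)^2+2*(y x)+5)^3 = ((-2) + (18)*(y x) + (-24)*(y x)^2 + (-20)*(y x)^3) := by
    linear_combination ((2) + (-10)*(deriv y x) + (-18)*(y x) + (86)*(y x)*(deriv y x) + (24)*(y x)^2 + (-66)*(y x)^2*(deriv y x) + (20)*(y x)^3 + (-326)*(y x)^3*(deriv y x) + (310)*(y x)^4*(deriv y x) + (78)*(y x)^5*(deriv y x) + (-280)*(y x)^6*(deriv y x) + (-100)*(y x)^7*(deriv y x)) * e1 + ((25) + (20)*(y x) + (-86)*(y x)^2 + (44)*(y x)^3 + (163)*(y x)^4 + (-124)*(y x)^5 + (-26)*(y x)^6 + (80)*(y x)^7 + (25)*(y x)^8) * e2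
  have M3 : (deriv (deriv (deriv y)) x) * (5*(y x)^4+8*(y x)^3-9*(y x)^2+2*(y x)+5)^5 = ((-102) + (420)*(y x) + (-702)*(y x)^2 + (1896)*(y x)^3 + (186)*(y x)^4 + (-2160)*(y x)^5 + (-900)*(y x)^6) := by
    linear_combination ((102) + (-510)*(deriv y x) + (2550)*(deriv y x)^2 + (-420)*(y x) + (1896)*(y x)*(deriv y x) + (-8460)*(y x)*(deriv y x)^2 + (702)*(y x)^2 + (-1752)*(y x)^2*(deriv y x) + (378)*(y x)^2*(deriv y x)^2 + (-1896)*(y x)^3 + (3480)*(y x)^3*(deriv y x) + (7248)*(y x)^3*(deriv y x)^2 + (-186)*(y x)^4 + (13890)*(y x)^4*(deriv y x) + (-104796)*(y x)^4*(deriv y x)^2 + (2160)*(y x)^5 + (-31008)*(y x)^5*(deriv y x) + (163116)*(y x)^5*(deriv y x)^2 + (900)*(y x)^6 + (1164)*(y x)^6*(deriv y x) + (162126)*(y x)^6*(deriv y x)^2 + (28608)*(y x)^7*(deriv y x) + (-552960)*(y x)^7*(deriv y x)^2 + (-8250)*(y x)^8*(deriv y x) + (173124)*(y x)^8*(deriv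 y x)^2 + (-18000)*(y x)^9*(deriv y x) + (509700)*(y x)^9*(deriv y x)^2 + (-4500)*(y x)^10*(deriv y x) + (-250434)*(y x)^10*(deriv y x)^2 + (-230040)*(y x)^11*(deriv y x)^2 + (144750)*(y x)^12*(deriv y x)^2 + (126000)*(y x)^13*(deriv y x)^2 + (22500)*(y x)^14*(deriv y x)^2) * e1 + ((-750)*(deriv y x) + (5850)*(y x)*(deriv y x) + (2790)*(y x)^2*(deriv y x) + (-51918)*(y x)^3*(deriv y x) + (27180)*(y x)^4*(deriv y x) + (145620)*(y x)^5*(deriv y x) + (-202818)*(y x)^6*(deriv y x) + (-147474)*(y x)^7*(deriv y x) + (374436)*(y x)^8*(deriv y x) + (-72300)*(y x)^9*(deriv y x) + (-286506)*(y x)^10*(deriv y x) + (99126)*(y x)^11*(deriv y x) + (101010)*(y x)^12*(deriv y x) + (-53550)*(y x)^13*(deriv y x) + (-45000)*(y x)^14*(deriv y x) + (-7500)*(y x)^15*(deriv y x)) * e2 + ((625) + (1000)*(y x) + (-3900)*(y x)^2 + (-1240)*(y x)^3 + (17306)*(y x)^4 + (-7248)*(y x)^5 + (-32360)*(y x)^6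 + (38632)*(y x)^7 + (24579)*(y x)^8 + (-55472)*(y x)^9 + (9640)*(y x)^10 + (34728)*(y x)^11 + (-11014)*(y x)^12 + (-10360)*(y x)^13 + (5100)*(y x)^14 + (4000)*(y x)^15 + (625)*(y x)^16) * e3
  have M4 : (deriv (deriv (deriv (deriv y))) x) * (5*(y x)^4+8*(y x)^3-9*(y x)^2+2*(y x)+5)^7 = ((-3120) + (19560)*(y x) + (-78912)*(y x)^2 + (91248)*(y x)^3 + (-98184)*(y x)^4 + (135792)*(y x)^5 + (276528)*(y x)^6 + (-125520)*(y x)^7 + (-226800)*(y x)^8 + (-63000)*(y x)^9) := by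
    linear_combination ((3120) + (-15600)*(deriv y x) + (78000)*(deriv y x)^2 + (-390000)*(deriv y x)^3 + (-19560)*(y x) + (91560)*(y x)*(deriv y x) + (-426600)*(y x)*(deriv y x)^2 + (1977000)*(y x)*(deriv y x)^3 + (78912)*(y x)^2 + (-327360)*(y x)^2*(deriv y x) + (1313280)*(y x)^2*(deriv y x)^2 + (-5011200)*(y x)^2*(deriv y x)^3 + (-91248)*(y x)^3 + (97416)*(y x)^3*(deriv y x) + (1116480)*(y x)^3*(deriv y x)^2 + (-12672360)*(y x)^3*(deriv y x)^3 + (98184)*(y x)^4 + (542664)*(y x)^4*(deriv y x) + (-6508872)*(y x)^4*(deriv y x)^2 + (45153720)*(y x)^4*(deriv y x)^3 + (-135792)*(y x)^5 + (-872136)*(y x)^5*(deriv y x) + (6313176)*(y x)^5*(deriv y x)^2 + (-16873056)*(y x)^5*(deriv y x)^3 + (-276528)*(y x)^6 + (2873304)*(y x)^6*(deriv y x) + (-6880800)*(y x)^6*(deriv y x)^2 + (-52300440)*(y x)^6*(deriv y x)^3 + (125520)*(y x)^7 + (-1625904)*(y x)^7*(deriv y x) + (-10294704)*(y x)^7*(deriv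 y x)^2 + (168542280)*(y x)^7*(deriv y x)^3 + (226800)*(y x)^8 + (-3278376)*(y x)^8*(deriv y x) + (49767192)*(y x)^8*(deriv y x)^2 + (-308134800)*(y x)^8*(deriv y x)^3 + (63000)*(y x)^9 + (3252264)*(y x)^9*(deriv y x) + (-42963456)*(y x)^9*(deriv y x)^2 + (46111080)*(y x)^9*(deriv y x)^3 + (2293680)*(y x)^10*(deriv y x) + (-48837600)*(y x)^10*(deriv y x)^2 + (894781272)*(y x)^10*(deriv y x)^3 + (-1875000)*(y x)^11*(deriv y x) + (68414544)*(y x)^11*(deriv y x)^2 + (-977732640)*(y x)^11*(deriv y x)^3 + (-1638000)*(y x)^12*(deriv y x) + (22956888)*(y x)^12*(deriv y x)^2 + (-596280240)*(y x)^12*(deriv y x)^3 + (-315000)*(y x)^13*(deriv y x) + (-46634760)*(y x)^13*(deriv y x)^2 + (1408509000)*(y x)^13*(deriv y x)^3 + (-10580400)*(y x)^14*(deriv y x)^2 + (49655160)*(y x)^14*(deriv y x)^3 + (19644000)*(y x)^15*(deriv y x)^2 + (-1022499864)*(y x)^15*(deriv y x)^3 + (10710000)*(y x)^16*(deriv y x)^2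 + (70232040)*(y x)^16*(deriv y x)^3 + (1575000)*(y x)^17*(deriv y x)^2 + (465318000)*(y x)^17*(deriv y x)^3 + (-11010000)*(y x)^18*(deriv y x)^3 + (-169725000)*(y x)^19*(deriv y x)^3 + (-66150000)*(y x)^20*(deriv y x)^3 + (-7875000)*(y x)^21*(deriv y x)^3) * e1 + ((-18750)*(deriv (deriv y) x) + (375000)*(deriv y x)^2 + (131250)*(y x)*(deriv (deriv y) x) + (-840000)*(y x)*(deriv y x)^2 + (251250)*(y x)^2*(deriv (deriv y) x) + (-2799000)*(y x)^2*(deriv y x)^2 + (-1778250)*(y x)^3*(deriv (deriv y) x) + (5553600)*(y x)^3*(deriv y x)^2 + (-463650)*(y x)^4*(deriv (deriv y) x) + (-7723740)*(y x)^4*(deriv y x)^2 + (9818358)*(y x)^5*(deriv (deriv y) x) + (-7072704)*(y x)^5*(deriv y x)^2 + (-7031052)*(y x)^6*(deriv (deriv y) x) + (74933064)*(y x)^6*(deriv y x)^2 + (-28091304)*(y x)^7*(deriv (deriv y) x) + (-114092640)*(y x)^7*(deriv y x)^2 + (41505930)*(y x)^8*(deriv (deriv y) x) + (-145098000)*(y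 x)^8*(deriv y x)^2 + (31525050)*(y x)^9*(deriv (deriv y) x) + (490339200)*(y x)^9*(deriv y x)^2 + (-103205586)*(y x)^10*(deriv (deriv y) x) + (-120706872)*(y x)^10*(deriv y x)^2 + (17642514)*(y x)^11*(deriv (deriv y) x) + (-769982688)*(y x)^11*(deriv y x)^2 + (122888298)*(y x)^12*(deriv (deriv y) x) + (679101420)*(y x)^12*(deriv y x)^2 + (-87415230)*(y x)^13*(deriv (deriv y) x) + (482639520)*(y x)^13*(deriv y x)^2 + (-70860300)*(y x)^14*(deriv (deriv y) x) + (-781489080)*(y x)^14*(deriv y x)^2 + (87794352)*(y x)^15*(deriv (deriv y) x) + (-100107936)*(y x)^15*(deriv y x)^2 + (16562862)*(y x)^16*(deriv (deriv y) x) + (497782656)*(y x)^16*(deriv y x)^2 + (-49894146)*(y x)^17*(deriv (deriv y) x) + (6268320)*(y x)^17*(deriv y x)^2 + (-2883630)*(y x)^18*(deriv (deriv y) x) + (-188427000)*(y x)^18*(deriv y x)^2 + (16308750)*(y x)^19*(deriv (deriv y) x) + (-480000)*(y x)^19*(deriv y x)^2 + (341250)*(y x)^20*(deriv (deriv y) x)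 + (61312500)*(y x)^20*(deriv y x)^2 + (-4743750)*(y x)^21*(deriv (deriv y) x) + (23100000)*(y x)^21*(deriv y x)^2 + (-1725000)*(y x)^22*(deriv (deriv y) x) + (2625000)*(y x)^22*(deriv y x)^2 + (-187500)*(y x)^23*(deriv (deriv y) x)) * e2 + ((-25000)*(deriv y x) + (175000)*(y x)*(deriv y x) + (335000)*(y x)^2*(deriv y x) + (-2371000)*(y x)^3*(deriv y x) + (-618200)*(y x)^4*(deriv y x) + (13091144)*(y x)^5*(deriv y x) + (-9374736)*(y x)^6*(deriv y x) + (-37455072)*(y x)^7*(deriv y x) + (55341240)*(y x)^8*(deriv y x) + (42033400)*(y x)^9*(deriv y x) + (-137607448)*(y x)^10*(deriv y x) + (23523352)*(y x)^11*(deriv y x) + (163851064)*(y x)^12*(deriv y x) + (-116553640)*(y x)^13*(deriv y x) + (-94480400)*(y x)^14*(deriv y x) + (117059136)*(y x)^15*(deriv y x) + (22083816)*(y x)^16*(deriv y x) + (-66525528)*(y x)^17*(deriv y x) + (-3844840)*(y x)^18*(deriv y x) + (21745000)*(y x)^19*(deriv y x) + (455000)*(y x)^20*(deriv y x) + (-6325000)*(y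 x)^21*(deriv y x) + (-2300000)*(y x)^22*(deriv y x) + (-250000)*(y x)^23*(deriv y x)) * e3 + ((15625) + (37500)*(y x) + (-131250)*(y x)^2 + (-167500)*(y x)^3 + (889125)*(y x)^4 + (185460)*(y x)^5 + (-3272786)*(y x)^6 + (2008872)*(y x)^7 + (7022826)*(y x)^8 + (-9223540)*(y x)^9 + (-6305010)*(y x)^10 + (18764652)*(y x)^11 + (-2940419)*(y x)^12 + (-18905892)*(y x)^13 + (12487890)*(y x)^14 + (9448040)*(y x)^15 + (-10974294)*(y x)^16 + (-1948572)*(y x)^17 + (5543794)*(y x)^18 + (303540)*(y x)^19 + (-1630875)*(y x)^20 + (-32500)*(y x)^21 + (431250)*(y x)^22 + (150000)*(y x)^23 + (15625)*(y x)^24) * e4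
  have M5 : (deriv (deriv (deriv (deriv (deriv y)))) x) * (5*(y x)^4+8*(y x)^3-9*(y x)^2+2*(y x)+5)^9 = ((-141480) + (1416960)*(y x) + (-4970520)*(y x)^2 + (13908960)*(y x)^3 + (-22371480)*(y x)^4 + (3965040)*(y x)^5 + (-7999920)*(y x)^6 + (-5238720)*(y x)^7 + (59995800)*(y x)^8 + (28859040)*(y x)^9 + (-33931800)*(y x)^10 + (-28728000)*(y x)^11 + (-5985000)*(y x)^12) := by
    linear_combination ((141480) + (-707400)*(deriv y x) + (3537000)*(deriv y x)^2 + (-17685000)*(deriv y x)^3 + (88425000)*(deriv y x)^4 + (-1416960)*(y x) + (6801840)*(y x)*(deriv y x) + (-32594400)*(y x)*(deriv y x)^2 + (155898000)*(y x)*(deriv y x)^3 + (-744120000)*(y x)*(deriv y x)^4 + (4970520)*(y x)^2 + (-20745360)*(y x)^2*(deriv y x) + (83756520)*(y x)^2*(deriv y x)^2 + (-321760800)*(y x)^2*(deriv y x)^3 + (1137843000)*(y x)^2*(deriv y x)^4 + (-13908960)*(y x)^3 + (45719280)*(y x)^3*(deriv y x) + (-120229920)*(y x)^3*(deriv y x)^2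 + (111990960)*(y x)^3*(deriv y x)^3 + (1628128800)*(y x)^3*(deriv y x)^4 + (22371480)*(y x)^4 + (-28676520)*(y x)^4*(deriv y x) + (-185641920)*(y x)^4*(deriv y x)^2 + (2165548320)*(y x)^4*(deriv y x)^3 + (-15106329720)*(y x)^4*(deriv y x)^4 + (-3965040)*(y x)^5 + (-182777760)*(y x)^5*(deriv y x) + (1514669040)*(y x)^5*(deriv y x)^2 + (-8791210800)*(y x)^5*(deriv y x)^3 + (42427472400)*(y x)^5*(deriv y x)^4 + (7999920)*(y x)^6 + (255692880)*(y x)^6*(deriv y x) + (-1433025000)*(y x)^6*(deriv y x)^2 + (3008066400)*(y x)^6*(deriv y x)^3 + (22744900800)*(y x)^6*(deriv y x)^4 + (5238720)*(y x)^7 + (-187305840)*(y x)^7*(deriv y x) + (-1219040640)*(y x)^7*(deriv y x)^2 + (24679559520)*(y x)^7*(deriv y x)^3 + (-226419168960)*(y x)^7*(deriv y x)^4 + (-59995800)*(y x)^8 + (281363760)*(y x)^8*(deriv y x) + (2874633480)*(y x)^8*(deriv y x)^2 + (-36021453840)*(y x)^8*(deriv y x)^3 + (217322692560)*(y x)^8*(deriv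 y x)^4 + (-28859040)*(y x)^9 + (267261120)*(y x)^9*(deriv y x) + (-4716439920)*(y x)^9*(deriv y x)^2 + (10752421680)*(y x)^9*(deriv y x)^3 + (260288357760)*(y x)^9*(deriv y x)^4 + (33931800)*(y x)^10 + (-733812480)*(y x)^10*(deriv y x) + (5886796320)*(y x)^10*(deriv y x)^2 + (22788049680)*(y x)^10*(deriv y x)^3 + (-672114984480)*(y x)^10*(deriv y x)^4 + (28728000)*(y x)^11 + (-17462160)*(y x)^11*(deriv y x) + (2645904960)*(y x)^11*(deriv y x)^2 + (-84352941360)*(y x)^11*(deriv y x)^3 + (637734235680)*(y x)^11*(deriv y x)^4 + (5985000)*(y x)^12 + (748856520)*(y x)^12*(deriv y x) + (-13858578360)*(y x)^12*(deriv y x)^2 + (140340600720)*(y x)^12*(deriv y x)^3 + (-233816778000)*(y x)^12*(deriv y x)^4 + (119422800)*(y x)^13*(deriv y x) + (2282207760)*(y x)^13*(deriv y x)^2 + (16607091600)*(y x)^13*(deriv y x)^3 + (-1358959637520)*(y x)^13*(deriv y x)^4 + (-345618000)*(y x)^14*(deriv y x) + (12037712760)*(y x)^14*(deriv y x)^2 +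 (-240081405840)*(y x)^14*(deriv y x)^3 + (2991141534960)*(y x)^14*(deriv y x)^4 + (-191520000)*(y x)^15*(deriv y x) + (-3179900160)*(y x)^15*(deriv y x)^2 + (110003047200)*(y x)^15*(deriv y x)^3 + (-621348698880)*(y x)^15*(deriv y x)^4 + (-29925000)*(y x)^16*(deriv y x) + (-7277562000)*(y x)^16*(deriv y x)^2 + (202122254880)*(y x)^16*(deriv y x)^3 + (-4225909757760)*(y x)^16*(deriv y x)^4 + (504000000)*(y x)^17*(deriv y x)^2 + (-124296718320)*(y x)^17*(deriv y x)^3 + (3044882295360)*(y x)^17*(deriv y x)^4 + (2990925000)*(y x)^18*(deriv y x)^2 + (-116210045520)*(y x)^18*(deriv y x)^3 + (2969126609760)*(y x)^18*(deriv y x)^4 + (1197000000)*(y x)^19*(deriv y x)^2 + (66689146800)*(y x)^19*(deriv y x)^3 + (-3386689382880)*(y x)^19*(deriv y x)^4 + (149625000)*(y x)^20*(deriv y x)^2 + (56132010000)*(y x)^20*(deriv y x)^3 + (-1476166281120)*(y x)^20*(deriv y x)^4 + (-15973650000)*(y x)^21*(deriv y x)^3 + (2118970506960)*(y x)^21*(deriv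 y x)^4 + (-23184000000)*(y x)^22*(deriv y x)^3 + (700592443200)*(y x)^22*(deriv y x)^4 + (-7182000000)*(y x)^23*(deriv y x)^3 + (-843986664000)*(y x)^23*(deriv y x)^4 + (-748125000)*(y x)^24*(deriv y x)^3 + (-343422225000)*(y x)^24*(deriv y x)^4 + (202198500000)*(y x)^25*(deriv y x)^4 + (166642875000)*(y x)^26*(deriv y x)^4 + (41895000000)*(y x)^27*(deriv y x)^4 + (3740625000)*(y x)^28*(deriv y x)^4) * e1 + ((23906250)*(deriv y x)*(deriv (deriv y) x) + (-87937500)*(deriv y x)^3 + (-41062500)*(y x)*(deriv y x)*(deriv (deriv y) x) + (309937500)*(y x)*(deriv y x)^3 + (-272531250)*(y x)^2*(deriv y x)*(deriv (deriv y) x) + (-308700000)*(y x)^2*(deriv y x)^3 + (521100000)*(y x)^3*(deriv y x)*(deriv (deriv y) x) + (-5246055000)*(y x)^3*(deriv y x)^3 + (-76545000)*(y x)^4*(deriv y x)*(deriv (deriv y) x) + (10144831500)*(y x)^4*(deriv y x)^3 + (-2947133700)*(y x)^5*(deriv y x)*(deriv (deriv y) x) + (20178934020)*(y x)^5*(deriv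 y x)^3 + (9742550670)*(y x)^6*(deriv y x)*(deriv (deriv y) x) + (-63501567480)*(y x)^6*(deriv y x)^3 + (-2920620240)*(y x)^7*(deriv y x)*(deriv (deriv y) x) + (6531487920)*(y x)^7*(deriv y x)^3 + (-51327422550)*(y x)^8*(deriv y x)*(deriv (deriv y) x) + (141570835920)*(y x)^8*(deriv y x)^3 + (81904602600)*(y x)^9*(deriv y x)*(deriv (deriv y) x) + (-176599935360)*(y x)^9*(deriv y x)^3 + (92422839240)*(y x)^10*(deriv y x)*(deriv (deriv y) x) + (80969640120)*(y x)^10*(deriv y x)^3 + (-337560876360)*(y x)^11*(deriv y x)*(deriv (deriv y) x) + (198928312200)*(y x)^11*(deriv y x)^3 + (74520730890)*(y x)^12*(deriv y x)*(deriv (deriv y) x) + (-784591997940)*(y x)^12*(deriv y x)^3 + (646897905900)*(y x)^13*(deriv y x)*(deriv (deriv y) x) + (804591769860)*(y x)^13*(deriv y x)^3 + (-612859290750)*(y x)^14*(deriv y x)*(deriv (deriv y) x) + (945155187720)*(y x)^14*(deriv y x)^3 + (-560825225280)*(y x)^15*(deriv y x)*(deriv (deriv y) x) + (-2371577196240)*(y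 x)^15*(deriv y x)^3 + (1123928587170)*(y x)^16*(deriv y x)*(deriv (deriv y) x) + (341878730400)*(y x)^16*(deriv y x)^3 + (21289671720)*(y x)^17*(deriv y x)*(deriv (deriv y) x) + (2640827612880)*(y x)^17*(deriv y x)^3 + (-1050591335400)*(y x)^18*(deriv y x)*(deriv (deriv y) x) + (-1493024755320)*(y x)^18*(deriv y x)^3 + (380147034600)*(y x)^19*(deriv y x)*(deriv (deriv y) x) + (-1671741680040)*(y x)^19*(deriv y x)^3 + (614707289010)*(y x)^20*(deriv y x)*(deriv (deriv y) x) + (1468226059740)*(y x)^20*(deriv y x)^3 + (-366826507380)*(y x)^21*(deriv y x)*(deriv (deriv y) x) + (753202666260)*(y x)^21*(deriv y x)^3 + (-251695115910)*(y x)^22*(deriv y x)*(deriv (deriv y) x) + (-832182892200)*(y x)^22*(deriv y x)^3 + (196018812000)*(y x)^23*(deriv y x)*(deriv (deriv y) x) + (-318562128000)*(y x)^23*(deriv y x)^3 + (93770325000)*(y x)^24*(deriv y x)*(deriv (deriv y) x) + (289693957500)*(y x)^24*(deriv y x)^3 + (-59435572500)*(y x)^25*(deriv y x)*(deriv (deriv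 y) x) + (123658312500)*(y x)^25*(deriv y x)^3 + (-28374468750)*(y x)^26*(deriv y x)*(deriv (deriv y) x) + (-65253375000)*(y x)^26*(deriv y x)^3 + (12670875000)*(y x)^27*(deriv y x)*(deriv (deriv y) x) + (-53501250000)*(y x)^27*(deriv y x)^3 + (10638281250)*(y x)^28*(deriv y x)*(deriv (deriv y) x) + (-13050000000)*(y x)^28*(deriv y x)^3 + (2531250000)*(y x)^29*(deriv y x)*(deriv (deriv y) x) + (-1125000000)*(y x)^29*(deriv y x)^3 + (210937500)*(y x)^30*(deriv y x)*(deriv (deriv y) x)) * e2 + ((-1562500)*(deriv (deriv y) x) + (15312500)*(deriv y x)^2 + (9687500)*(y x)*(deriv (deriv y) x) + (-17625000)*(y x)*(deriv y x)^2 + (35062500)*(y x)^2*(deriv (deriv y) x) + (-215062500)*(y x)^2*(deriv y x)^2 + (-171812500)*(y x)^3*(deriv (deriv y) x) + (224600000)*(y x)^3*(deriv y x)^2 + (-220150000)*(y x)^4*(deriv (deriv y) x) + (660555000)*(y x)^4*(deriv y x)^2 + (1412964000)*(y x)^5*(deriv (deriv y) x) + (-1753504200)*(y x)^5*(deriv y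 x)^2 + (24626700)*(y x)^6*(deriv (deriv y) x) + (1100451420)*(y x)^6*(deriv y x)^2 + (-6778684260)*(y x)^7*(deriv (deriv y) x) + (2676767040)*(y x)^7*(deriv y x)^2 + (5536423980)*(y x)^8*(deriv (deriv y) x) + (-14439759300)*(y x)^8*(deriv y x)^2 + (18174104700)*(y x)^9*(deriv (deriv y) x) + (18334002480)*(y x)^9*(deriv y x)^2 + (-30808759080)*(y x)^10*(deriv (deriv y) x) + (31430437200)*(y x)^10*(deriv y x)^2 + (-21839333040)*(y x)^11*(deriv (deriv y) x) + (-102963272400)*(y x)^11*(deriv y x)^2 + (82977711180)*(y x)^12*(deriv (deriv y) x) + (21395984100)*(y x)^12*(deriv y x)^2 + (-17935734180)*(y x)^13*(deriv (deriv y) x) + (212925072600)*(y x)^13*(deriv y x)^2 + (-125152622100)*(y x)^14*(deriv (deriv y) x) + (-211844521260)*(y x)^14*(deriv y x)^2 + (103914035460)*(y x)^15*(deriv (deriv y) x) + (-184474908000)*(y x)^15*(deriv y x)^2 + (95012641980)*(y x)^16*(deriv (deriv y) x) + (396701131500)*(y x)^16*(deriv y x)^2 + (-163327071060)*(y x)^17*(deriv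 (deriv y) x) + (-9462214800)*(y x)^17*(deriv y x)^2 + (-12353343240)*(y x)^18*(deriv (deriv y) x) + (-370613478000)*(y x)^18*(deriv y x)^2 + (136705959600)*(y x)^19*(deriv (deriv y) x) + (148901285520)*(y x)^19*(deriv y x)^2 + (-39593467620)*(y x)^20*(deriv (deriv y) x) + (215072176500)*(y x)^20*(deriv y x)^2 + (-73215331860)*(y x)^21*(deriv (deriv y) x) + (-138780339240)*(y x)^21*(deriv y x)^2 + (36961620540)*(y x)^22*(deriv (deriv y) x) + (-88021434780)*(y x)^22*(deriv y x)^2 + (27389406420)*(y x)^23*(deriv (deriv y) x) + (73345111200)*(y x)^23*(deriv y x)^2 + (-18444240000)*(y x)^24*(deriv (deriv y) x) + (33117255000)*(y x)^24*(deriv y x)^2 + (-9257976000)*(y x)^25*(deriv (deriv y) x) + (-22466025000)*(y x)^25*(deriv y x)^2 + (5075122500)*(y x)^26*(deriv (deriv y) x) + (-10349437500)*(y x)^26*(deriv y x)^2 + (2472312500)*(y x)^27*(deriv (deriv y) x) + (4775750000)*(y x)^27*(deriv y x)^2 + (-1009562500)*(y x)^28*(deriv (deriv y) x) + (3949687500)*(y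 x)^28*(deriv y x)^2 + (-839062500)*(y x)^29*(deriv (deriv y) x) + (937500000)*(y x)^29*(deriv y x)^2 + (-193750000)*(y x)^30*(deriv (deriv y) x) + (78125000)*(y x)^30*(deriv y x)^2 + (-15625000)*(y x)^31*(deriv (deriv y) x)) * e3 + ((-781250)*(deriv y x) + (4843750)*(y x)*(deriv y x) + (17531250)*(y x)^2*(deriv y x) + (-85906250)*(y x)^3*(deriv y x) + (-110075000)*(y x)^4*(deriv y x) + (706482000)*(y x)^5*(deriv y x) + (12313350)*(y x)^6*(deriv y x) + (-3389342130)*(y x)^7*(deriv y x) + (2768211990)*(y x)^8*(deriv y x) + (9087052350)*(y x)^9*(deriv y x) + (-15404379540)*(y x)^10*(deriv y x) + (-10919666520)*(y x)^11*(deriv y x) + (41488855590)*(y x)^12*(deriv y x) + (-8967867090)*(y x)^13*(deriv y x) + (-62576311050)*(y x)^14*(deriv y x) + (51957017730)*(y x)^15*(deriv y x) + (47506320990)*(y x)^16*(deriv y x) + (-81663535530)*(y x)^17*(deriv y x) + (-6176671620)*(y x)^18*(deriv y x) + (68352979800)*(y x)^19*(deriv y x) + (-19796733810)*(y x)^20*(deriv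 y x) + (-36607665930)*(y x)^21*(deriv y x) + (18480810270)*(y x)^22*(deriv y x) + (13694703210)*(y x)^23*(deriv y x) + (-9222120000)*(y x)^24*(deriv y x) + (-4628988000)*(y x)^25*(deriv y x) + (2537561250)*(y x)^26*(deriv y x) + (1236156250)*(y x)^27*(deriv y x) + (-504781250)*(y x)^28*(deriv y x) + (-419531250)*(y x)^29*(deriv y x) + (-96875000)*(y x)^30*(deriv y x) + (-7812500)*(y x)^31*(deriv y x)) * e4 + ((390625) + (1250000)*(y x) + (-3875000)*(y x)^2 + (-9350000)*(y x)^3 + (34362500)*(y x)^4 + (35224000)*(y x)^5 + (-188395200)*(y x)^6 + (-2814480)*(y x)^7 + (677868426)*(y x)^8 + (-492126576)*(y x)^9 + (-1453928376)*(y x)^10 + (2240637024)*(y x)^11 + (1455955536)*(y x)^12 + (-5106320688)*(y x)^13 + (1024899096)*(y x)^14 + (6674806512)*(y x)^15 + (-5195701773)*(y x)^16 + (-4471183152)*(y x)^17 + (7258980936)*(y x)^18 + (520140768)*(y x)^19 + (-5468238384)*(y x)^20 + (1508322576)*(y x)^21 + (2662375704)*(y x)^22 + (-1285621584)*(y x)^23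 + (-912980214)*(y x)^24 + (590215680)*(y x)^25 + (284860800)*(y x)^26 + (-150374000)*(y x)^27 + (-70637500)*(y x)^28 + (27850000)*(y x)^29 + (22375000)*(y x)^30 + (5000000)*(y x)^31 + (390625)*(y x)^32) * e5
  suffices key : ((-43728190560 + 795819153 * x - 53446888 * x ^ 2 + 56028 * x ^ 3) *
        (-1585575 + 71982 * x + 281583 * x ^ 2 + 81342 * x ^ 3 + 3125 * x ^ 4) *
        deriv (deriv (deriv (deriv (deriv y)))) x
      + 15 * (-650327879439783 - 5747872136026563 * x - 2400588229818366 * x ^ 2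
          - 91559102743545 * x ^ 3 - 304019551433 * x ^ 4 - 131338505212 * x ^ 5
          + 128397500 * x ^ 6) * deriv (deriv (deriv (deriv y))) x
      + 60 * (-1821690090417321 - 1560609625036728 * x - 98711280942848 * x ^ 2
          + 721492325057 * x ^ 3 - 103787727624 * x ^ 4 + 91045500 * x ^ 5) *
          deriv (deriv (deriv y)) x
      + 180 * (-282046871305467 - 38794189010031 * x + 478890241959 * x ^ 2
          - 28458003540 * x ^ 3 + 21944300 * x ^ 4) * deriv (deriv y) x
      + 720 * (-1756652589603 + 23053844253 * x - 812236372 * x ^ 2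
          + 522928 * x ^ 3) * deriv y x) * (5*(y x)^4+8*(y x)^3-9*(y x)^2+2*(y x)+5)^9 = 0 by
    exact (mul_eq_zero.mp key).resolve_right (pow_ne_zero 9 hD)
  linear_combination ((-43728190560 + 795819153 * x - 53446888 * x ^ 2 + 56028 * x ^ 3) * (-1585575 + 71982 * x + 281583 * x ^ 2 + 81342 * x ^ 3 + 3125 * x ^ 4)) * M5 + (15 * (-650327879439783 - 5747872136026563 * x - 2400588229818366 * x ^ 2 - 91559102743545 * x ^ 3 - 304019551433 * x ^ 4 - 131338505212 * x ^ 5 + 128397500 * x ^ 6) * (5*(y x)^4+8*(y x)^3-9*(y x)^2+2*(y x)+5)^2) * M4 + (60 * (-1821690090417321 - 1560609625036728 * x - 98711280942848 * x ^ 2 + 721492325057 * x ^ 3 - 103787727624 * x ^ 4 + 91045500 * x ^ 5) * (5*(y x)^4+8*(y x)^3-9*(y x)^2+2*(y x)+5)^4) * M3 + (180 * (-282046871305467 - 38794189010031 * x + 478890241959 * x ^ 2 - 28458003540 * x ^ 3 + 21944300 * x ^ 4) * (5*(y x)^4+8*(y x)^3-9*(y x)^2+2*(y x)+5)^6) * M2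 + (720 * (-1756652589603 + 23053844253 * x - 812236372 * x ^ 2 + 522928 * x ^ 3) * (5*(y x)^4+8*(y x)^3-9*(y x)^2+2*(y x)+5)^8) * M1 + ((13529927954577220419600) + (-84047129195156490367800)*(y x) + (272995815837145976939880)*(y x)^2 + (-454232393644739499160200)*(y x)^3 + (128566389673100001738240)*(y x)^4 + (-93624253874643721572000)*(y x)^5 + (389521271261959619212440)*(y x)^6 + (-680274961548286559152320)*(y x)^7 + (1334407864829645870418600)*(y x)^8 + (1367949062033803779120720)*(y x)^9 + (-1973686760240929200199440)*(y x)^10 + (-2559670335662191262343000)*(y x)^11 + (2934408910916586149163360)*(y x)^12 + (1758018910453731237757320)*(y x)^13 + (-3258136345250200769723880)*(y x)^14 + (-648007190512575001368480)*(y x)^15 + (2610759648401968118520240)*(y x)^16 + (707157948418215728729040)*(y x)^17 + (-1248243395627156695380360)*(y x)^18 + (-470663895008486123376840)*(y x)^19 + (527099591883643373917800)*(y x)^20 + (334726072984976283108000)*(y x)^21 + (-52859117962241136090000)*(y x)^22 + (-64852100302963554000000)*(y x)^23 + (12517467190363577250000)*(y x)^24 + (19110184359143636250000)*(y x)^25 +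 (5335832240919112500000)*(y x)^26 + (494058540825843750000)*(y x)^27 + (4905758863227278263320)*x + (-36422450296213417750440)*x*(y x) + (131877751102720371297720)*x*(y x)^2 + (-211328305075859363081640)*x*(y x)^3 + (221848789110630941973240)*x*(y x)^4 + (-62878859162030272703760)*x*(y x)^5 + (-232091503821756133634880)*x*(y x)^6 + (-238211032900882458729600)*x*(y x)^7 + (686518199945630864012520)*x*(y x)^8 + (-564339615369494029013520)*x*(y x)^9 + (-703258962537472499544480)*x*(y x)^10 + (1169471158029860802271560)*x*(y x)^11 + (787439419673963653369800)*x*(y x)^12 + (-809993466887356327809240)*x*(y x)^13 + (-693433626018947543900160)*x*(y x)^14 + (416185066537691961949920)*x*(y x)^15 + (546179422587436773423360)*x*(y x)^16 + (9644929222509596370960)*x*(y x)^17 + (-124401083671720803311640)*x*(y x)^18 + (6481826520402762078840)*x*(y x)^19 + (37646400838951810492200)*x*(y x)^20 + (12294798646503414492000)*x*(y x)^21 + (2590033540930656840000)*x*(y x)^22 + (851101822132254000000)*x*(y x)^23 + (-164275930685814750000)*x*(y x)^24 + (-250797008167323750000)*x*(y x)^25 + (-70026051918487500000)*x*(y x)^26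 + (-6483893696156250000)*x*(y x)^27 + (576612767173519751760)*x^2 + (-5373367422148176133320)*x^2*(y x) + (19030864647918352344480)*x^2*(y x)^2 + (-47004898555402324911720)*x^2*(y x)^3 + (71252805113800454216160)*x^2*(y x)^4 + (-11859156321056905720320)*x^2*(y x)^5 + (12138558417050341366800)*x^2*(y x)^6 + (10148708276128120651200)*x^2*(y x)^7 + (-137885954206685147573040)*x^2*(y x)^8 + (-134225649392104420367760)*x^2*(y x)^9 + (64457562150208519091640)*x^2*(y x)^10 + (166913896333403598604920)*x^2*(y x)^11 + (34007161497317108429760)*x^2*(y x)^12 + (-53767176635905597463400)*x^2*(y x)^13 + (-5155206421979391452640)*x^2*(y x)^14 + (20886775652351100892320)*x^2*(y x)^15 + (7458672929285016531360)*x^2*(y x)^16 + (2235965164749801030960)*x^2*(y x)^17 + (1488157902266088888360)*x^2*(y x)^18 + (-223542163992015371160)*x^2*(y x)^19 + (-409683231139818007800)*x^2*(y x)^20 + (-89776632375883008000)*x^2*(y x)^21 + (-52230221185605660000)*x^2*(y x)^22 + (-29986142381496000000)*x^2*(y x)^23 + (5787793327779000000)*x^2*(y x)^24 + (8836116431895000000)*x^2*(y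 x)^25 + (2467167979950000000)*x^2*(y x)^26 + (228441479625000000)*x^2*(y x)^27 + (13056061046953455360)*x^3 + (-128238433382589293520)*x^3*(y x) + (453305087002263608280)*x^3*(y x)^2 + (-1257678792858973007520)*x^3*(y x)^3 + (2011966016717161324800)*x^3*(y x)^4 + (-436433806322197950240)*x^3*(y x)^5 + (672252355052119894680)*x^3*(y x)^6 + (437469828764258736000)*x^3*(y x)^7 + (-5246524095311516085720)*x^3*(y x)^8 + (-1937048742062578498320)*x^3*(y x)^9 + (3051559944383816981160)*x^3*(y x)^10 + (1776924653002395593760)*x^3*(y x)^11 + (657924399451152564480)*x^3*(y x)^12 + (368762982860910207600)*x^3*(y x)^13 + (-313134324046114565880)*x^3*(y x)^14 + (-90634267526693650560)*x^3*(y x)^15 + (203843673088488344160)*x^3*(y x)^16 + (-21137385686225657040)*x^3*(y x)^17 + (-102246143134515020640)*x^3*(y x)^18 + (611264459740407840)*x^3*(y x)^19 + (32263787426521687200)*x^3*(y x)^20 + (12018344681472192000)*x^3*(y x)^21 + (1392779355135840000)*x^3*(y x)^22 + (19305455904000000)*x^3*(y x)^23 + (-3726254196000000)*x^3*(y x)^24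 + (-5688802980000000)*x^3*(y x)^25 + (-1588393800000000)*x^3*(y x)^26 + (-147073500000000)*x^3*(y x)^27 + (414315207774925560)*x^4 + (-3567693052775394720)*x^4*(y x) + (12882240403177376520)*x^4*(y x)^2 + (-27185999025478835520)*x^4*(y x)^3 + (38212513635346769160)*x^4*(y x)^4 + (-7953433300896647760)*x^4*(y x)^5 + (-7471417160087993520)*x^4*(y x)^6 + (-1813131274900628160)*x^4*(y x)^7 + (-25029380942561291400)*x^4*(y x)^8 + (-88580203990979709600)*x^4*(y x)^9 + (230474504516187240)*x^4*(y x)^10 + (132978719504626244640)*x^4*(y x)^11 + (31745763386458877880)*x^4*(y x)^12 + (-65970837703660114080)*x^4*(y x)^13 + (-13884836401284949440)*x^4*(y x)^14 + (26804833133762332800)*x^4*(y x)^15 + (14306330335402728000)*x^4*(y x)^16 + (2144864707203960000)*x^4*(y x)^17 + (81124124791500000)*x^4*(y x)^18 + (-435820801500000)*x^4*(y x)^19 + (-25614215707500000)*x^4*(y x)^20 + (-9568181700000000)*x^4*(y x)^21 + (-1087293375000000)*x^4*(y x)^22 + (22835195145587520)*x^5 + (-229259652151991040)*x^5*(y x)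 + (803786019014400480)*x^5*(y x)^2 + (-2257827929820599040)*x^5*(y x)^3 + (3636585774346907520)*x^5*(y x)^4 + (-642268270013376960)*x^5*(y x)^5 + (1322196065792866080)*x^5*(y x)^6 + (861489127195217280)*x^5*(y x)^7 + (-9829544929030519200)*x^5*(y x)^8 + (-4659090711409632960)*x^5*(y x)^9 + (5570345218716583200)*x^5*(y x)^10 + (4594905698805072000)*x^5*(y x)^11 + (954290884861440000)*x^5*(y x)^12 + (61652875032000000)*x^5*(y x)^13 + (13164822121500000)*x^5*(y x)^14 + (-24976441980000000)*x^5*(y x)^15 + (-13501347300000000)*x^5*(y x)^16 + (-1985492250000000)*x^5*(y x)^17 + (-24771379500000)*x^6 + (248091984000000)*x^6*(y x) + (-870275920500000)*x^6*(y x)^2 + (2435285034000000)*x^6*(y x)^3 + (-3916966504500000)*x^6*(y x)^4 + (694228941000000)*x^6*(y x)^5 + (-1400685993000000)*x^6*(y x)^6 + (-917234388000000)*x^6*(y x)^7 + (10504514632500000)*x^6*(y x)^8 + (5052857166000000)*x^6*(y x)^9 + (-5941034032500000)*x^6*(y x)^10 + (-5029913700000000)*x^6*(y x)^11 + (-1047898687500000)*x^6*(y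 x)^12) * hrel
end
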